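/- arXiv:1711.10239 — 2 statements merged into one kernel-verified Lean document; each statement's English description precedes it below -/
import Mathlib

section
/- Grafting morphism property of Υ̊ (Lemma 'lem:graftMorphism', first identity): For every family F = (F^𝔩_𝔱)_{𝔱∈𝔏₊,𝔩∈𝔇} with every F^𝔩_𝔱 ∈ 𝒫, every o ∈ 𝒪, and all σ, σ̃ ∈ 𝔅, one has Υ̊^F[σ̃ ⋖_o σ] = Υ̊^F[σ̃] ◁_o Υ̊^F[σ] in 𝒫^{𝔏₊}, where Υ̊^F is extended linearly to finite linear combinations of trees. -/
/-
Common framework: multi-indices, the algebra of smooth functions on ℝ^𝒪,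
and the spaces of decorated trees 𝒱 and 𝔅 of [Bruned–Chandra–Chevyrev–Hairer,
"Renormalising SPDEs in regularity structures"], presented abstractly together
with the defining recursions of the various operators on them.
-/

open scoped BigOperators Classical

namespace SPDERenorm

/-! ### Multi-indices in `ℕ^{d+1}` -/

abbrev MIdx (d : ℕ) := Fin (d+1) → ℕ

/-- `k! = ∏ᵢ k[i]!`. -/
def mfact {d : ℕ} (k : MIdx d) : ℕ := ∏ i, Nat.factorial (k i)

/-- `C(k,ℓ) = ∏ᵢ binom(k[i], ℓ[i])`. -/
def mchoose {d : ℕ} (k l : MIdx d) : ℕ := ∏ i, Nat.choose (k i) (l i)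

/-- `|k| = Σᵢ k[i]`. -/
def msize {d : ℕ} (k : MIdx d) : ℕ := ∑ i, k i

/-- The unit multi-index `e_i`. -/
def munit {d : ℕ} (i : Fin (d+1)) : MIdx d := Pi.single i 1

/-- Sum of `f ℓ` over all multi-indices `ℓ ≤ m` (componentwise). -/
noncomputable def msum {d : ℕ} {A : Type*} [AddCommMonoid A] (m : MIdx d) (f : MIdx d → A) : A :=
  ∑ e : (∀ i : Fin (d+1), Fin (m i + 1)), f fun i => (e i : ℕ)

/-- The scaled size `|k|_𝔰 = Σᵢ k[i]·𝔰ᵢ`. -/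
noncomputable def wdeg {d : ℕ} (s : Fin (d+1) → ℝ) (k : MIdx d) : ℝ := ∑ i, (k i : ℝ) * s i

/-- The index set `𝒪 = 𝔏₊ × ℕ^{d+1}`. -/
abbrev Odx (Lp : Type) (d : ℕ) := Lp × MIdx d

/-! ### Functions on `ℝ^𝒪` and differential operators -/

/-- Real-valued functions on `ℝ^𝒪`. -/
abbrev FnO (Lp : Type) (d : ℕ) := (Odx Lp d → ℝ) → ℝ

/-- The coordinate function `𝒳_o`. -/
def Xc {Lp : Type} {d : ℕ} (o : Odx Lp d) : FnO Lp d := fun x => x o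

/-- The partial derivative `D_o` in the `o`-th coordinate. -/
noncomputable def Dpart {Lp : Type} {d : ℕ} [DecidableEq Lp] (o : Odx Lp d) (F : FnO Lp d) :
    FnO Lp d :=
  fun x => deriv (fun t : ℝ => F (Function.update x o t)) (x o)

/-- Iterated partial derivatives `D_{o₁} ∘ ⋯ ∘ D_{oₙ}` over a list. -/
noncomputable def Dlist {Lp : Type} {d : ℕ} [DecidableEq Lp] (L : List (Odx Lp d))
    (F : FnO Lp d) : FnO Lp d :=
  L.foldr Dpart F

/-- The derivation `∂_i F = Σ_{(𝔱,p)} 𝒳_{(𝔱,p+e_i)} · D_{(𝔱,p)} F`. -/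
noncomputable def pderivO {Lp : Type} {d : ℕ} [DecidableEq Lp] (i : Fin (d+1)) (F : FnO Lp d) :
    FnO Lp d :=
  fun x => ∑ᶠ o : Odx Lp d, Xc (o.1, o.2 + munit i) x * Dpart o F x

/-- `∂^k = ∏ᵢ ∂ᵢ^{k[i]}`. -/
noncomputable def mpderiv {Lp : Type} {d : ℕ} [DecidableEq Lp] (k : MIdx d) (F : FnO Lp d) :
    FnO Lp d :=
  (List.finRange (d+1)).foldr (fun i G => (pderivO i)^[k i] G) F

/-- `D^α` for a finitely supported `α ∈ ℕ^𝒪`. -/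
noncomputable def Dexp {Lp : Type} {d : ℕ} [DecidableEq Lp] (α : Odx Lp d →₀ ℕ)
    (F : FnO Lp d) : FnO Lp d :=
  Dlist (Finsupp.toMultiset α).toList F

/-- `α! = ∏_o α[o]!`. -/
def afact {Lp : Type} {d : ℕ} (α : Odx Lp d →₀ ℕ) : ℕ := α.prod fun _ n => Nat.factorial n

/-- The monomial `𝒳^α`. -/
noncomputable def Xpow {Lp : Type} {d : ℕ} (α : Odx Lp d →₀ ℕ) : FnO Lp d :=
  fun x => α.prod fun o n => x o ^ n

/-- `F` depends only on the coordinates in `s`. -/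
def DependsOnlyOn {Lp : Type} {d : ℕ} (F : FnO Lp d) (s : Set (Odx Lp d)) : Prop :=
  ∀ x y, (∀ o ∈ s, x o = y o) → F x = F y

/-- Membership in `𝒞_𝒪`: smooth functions depending on finitely many coordinates. -/
def IsSmoothCO {Lp : Type} {d : ℕ} (F : FnO Lp d) : Prop :=
  ∃ (s : Finset (Odx Lp d)) (g : (↥s → ℝ) → ℝ),
    ContDiff ℝ (⊤ : ℕ∞) g ∧ ∀ x, F x = g fun o => x o.1

/-- Membership in `𝒫 ⊆ 𝒞_𝒪` (relative to the partition `𝒪 = 𝒪₊ ⊔ 𝒪₋`). -/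
def IsP {Lp : Type} {d : ℕ} (Om Op : Set (Odx Lp d)) (F : FnO Lp d) : Prop :=
  ∃ (m : ℕ) (α : Fin m → (Odx Lp d →₀ ℕ)) (G : Fin m → FnO Lp d),
    Function.Injective α ∧
    (∀ j, ∀ o ∈ (α j).support, o ∈ Om) ∧
    (∀ j, IsSmoothCO (G j)) ∧
    (∀ j, G j ≠ 0) ∧
    (∀ j, DependsOnlyOn (G j) Op) ∧
    F = fun x => ∑ j, G j x * Xpow (α j) x

/-- `F` is a real polynomial in finitely many of the coordinate functions. -/
def IsPolyFn {Lp : Type} {d : ℕ} (F : FnO Lp d) : Prop :=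
  ∃ (s : Finset (Odx Lp d)) (P : MvPolynomial (↥s) ℝ),
    ∀ x, F x = MvPolynomial.eval (fun o => x o.1) P

/-! ### The trees of `𝒱` -/

/-- The set `𝒱` of decorated rooted trees, presented abstractly: a tree is uniquely
built from a root decoration `(𝔩,k) ∈ 𝔇 × ℕ^{d+1}` and a multiset of decorated branches,
and every tree arises this way (induction). -/
structure TreeV (Lp Dr : Type) (d : ℕ) where
  V : Type
  node : Dr → MIdx d → Multiset (Odx Lp d × V) → V
  node_bij : Function.Bijective
    (fun x : Dr × MIdx d × Multiset (Odx Lp d × V) => node x.1 x.2.1 x.2.2)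
  ind : ∀ P : V → Prop,
    (∀ l k (M : Multiset (Odx Lp d × V)), (∀ x ∈ M, P x.2) → P (node l k M)) → ∀ τ, P τ

namespace TreeV

variable {Lp Dr : Type} {d : ℕ} (S : TreeV Lp Dr d)

/-- Rebuild a tree after replacing the `j`-th branch by a linear combination of trees. -/
noncomputable def replace (l : Dr) (k : MIdx d) (L : List (Odx Lp d × S.V))
    (j : Fin L.length) (w : S.V →₀ ℝ) : S.V →₀ ℝ :=
  w.sum fun τ' c => Finsupp.single (S.node l k (↑(L.set j ((L.get j).1, τ')))) c

/-- Decomposition of a tree into its root decoration and branches. -/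
noncomputable def dec : S.V ≃ Dr × MIdx d × Multiset (Odx Lp d × S.V) :=
  (Equiv.ofBijective _ S.node_bij).symm

/-- The polynomial decoration at the root. -/
noncomputable def polyOf (τ : S.V) : MIdx d := (S.dec τ).2.1

/-- The multiset of branches at the root. -/
noncomputable def branchesOf (τ : S.V) : Multiset (Odx Lp d × S.V) := (S.dec τ).2.2

/-- The commutative tree product merging the roots of `g 0, …, g (n-1)`
(adding the polynomial decorations), the merged root receiving the driver label `l`. -/
noncomputable def merge (l : Dr) {n : ℕ} (g : Fin n → S.V) : S.V :=
  S.node l (∑ r, S.polyOf (g r)) (∑ r, S.branchesOf (g r))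

/-- Defining recursion of the grafting operators `⋖̂_o : 𝕍 ⊗ 𝕍 → 𝕍`. -/
def GraftSpec [DecidableEq Lp] (graft : Odx Lp d → S.V → S.V → (S.V →₀ ℝ)) : Prop :=
  ∀ (t : Lp) (p : MIdx d) (τ : S.V) (l : Dr) (k : MIdx d) (L : List (Odx Lp d × S.V)),
    graft (t, p) τ (S.node l k ↑L) =
      msum (k ⊓ p) (fun ℓ =>
        (mchoose k ℓ : ℝ) •
          Finsupp.single (S.node l (k - ℓ) (((t, p - ℓ), τ) ::ₘ (↑L : Multiset _))) 1)
      + ∑ j : Fin L.length, S.replace l k L j (graft (t, p) τ (L.get j).2)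

/-- Defining recursion of the symmetry factor `S(τ)`. -/
def SymSpec [DecidableEq Lp] [DecidableEq S.V] (sym : S.V → ℕ) : Prop :=
  ∀ (l : Dr) (k : MIdx d) (M : Multiset (Odx Lp d × S.V)),
    sym (S.node l k M) =
      mfact k * ∏ x ∈ M.toFinset, Nat.factorial (M.count x) * sym x.2 ^ M.count x

/-- Defining recursion of the inner product on `𝕍`. -/
def IPSpec (ip : S.V → S.V → ℝ) : Prop :=
  ∀ (l l' : Dr) (k k' : MIdx d) (L L' : List (Odx Lp d × S.V)),
    ip (S.node l k ↑L) (S.node l' k' ↑L') =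
      (if l = l' ∧ k = k' then (mfact k : ℝ) else 0) *
        ∑ s : Fin L.length ≃ Fin L'.length,
          ∏ j : Fin L.length,
            (if (L.get j).1 = (L'.get (s j)).1 then ip (L.get j).2 (L'.get (s j)).2 else 0)

/-- Defining recursion of `Υ^F`. -/
def UpsSpec [DecidableEq Lp] (F : Lp → Dr → FnO Lp d) (Ups : Lp → S.V → FnO Lp d) : Prop :=
  ∀ (t : Lp) (l : Dr) (k : MIdx d) (L : List (Odx Lp d × S.V)),
    Ups t (S.node l k ↑L) = fun x =>
      (∏ j : Fin L.length, Ups (L.get j).1.1 (L.get j).2 x) *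
        mpderiv k (Dlist (L.map Prod.fst) (F t l)) x

/-- Defining recursion of the raising operator `↑̂_i` on `𝕍`. -/
def RaiseSpec (raise : Fin (d+1) → S.V → (S.V →₀ ℝ)) : Prop :=
  ∀ (i : Fin (d+1)) (l : Dr) (k : MIdx d) (L : List (Odx Lp d × S.V)),
    raise i (S.node l k ↑L) =
      Finsupp.single (S.node l (k + munit i) ↑L) 1
      + ∑ j : Fin L.length, S.replace l k L j (raise i (L.get j).2)

/-- Defining recursion of the cutting operator `⋖̂*_o : 𝕍 → 𝕍 ⊗ 𝕍` (elements of
`𝕍 ⊗ 𝕍` represented as finitely supported functions on pairs of trees, a pair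
`(branch, trunk)` recording a cut). -/
def CutSpec [DecidableEq Lp] (cut : Odx Lp d → S.V → (S.V × S.V →₀ ℝ)) : Prop :=
  ∀ (t : Lp) (p : MIdx d) (l : Dr) (k : MIdx d) (L : List (Odx Lp d × S.V)),
    cut (t, p) (S.node l k ↑L) =
      (∑ j : Fin L.length,
        if (L.get j).1.1 = t ∧ (L.get j).1.2 ≤ p then
          ((mfact (p - (L.get j).1.2) : ℝ))⁻¹ •
            Finsupp.single ((L.get j).2,
              S.node l (k + (p - (L.get j).1.2)) ↑(L.eraseIdx j)) 1
        else 0)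
      + ∑ j : Fin L.length,
          (cut (t, p) (L.get j).2).sum fun ab c =>
            Finsupp.single (ab.1, S.node l k ↑(L.set j ((L.get j).1, ab.2))) c

/-- Defining recursion of the lowering operator `↑̂*_i` on `𝕍`. -/
def LowSpec (low : Fin (d+1) → S.V → (S.V →₀ ℝ)) : Prop :=
  ∀ (i : Fin (d+1)) (l : Dr) (k : MIdx d) (L : List (Odx Lp d × S.V)),
    low i (S.node l k ↑L) =
      (k i : ℝ) • Finsupp.single (S.node l (k - munit i) ↑L) 1
      + ∑ j : Fin L.length, S.replace l k L j (low i (L.get j).2)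

/-- Defining recursion of the predicate "`τ` is `𝔱`-non-vanishing for `F`". -/
def NVSpec [DecidableEq Lp] (F : Lp → Dr → FnO Lp d) (NV : Lp → S.V → Prop) : Prop :=
  ∀ (t : Lp) (l : Dr) (k : MIdx d) (L : List (Odx Lp d × S.V)),
    NV t (S.node l k ↑L) ↔
      (mpderiv k (Dlist (L.map Prod.fst) (F t l)) ≠ 0 ∧
        ∀ j : Fin L.length, NV (L.get j).1.1 (L.get j).2)

/-- The coefficient series of `U_o − u_o·𝟏`, for the jet `U` with Taylor coefficients `u`
and planted-tree coefficients `c_𝔱(τ)/S(τ)`. -/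
noncomputable def uSeries (z : Dr) (u : Odx Lp d → ℝ) (c : Lp → S.V → ℝ) (sym : S.V → ℕ)
    (o : Odx Lp d) (σ : S.V) : ℝ :=
  (∑ᶠ q : MIdx d, if q ≠ 0 ∧ σ = S.node z q 0 then u (o.1, o.2 + q) / (mfact q : ℝ) else 0) +
  ∑ᶠ τ : S.V, if σ = S.node z 0 {(o, τ)} then c o.1 τ / (sym τ : ℝ) else 0

/-- The coefficient series of the product `(U − u·𝟏)^α · Ξ_l`, expanded by multilinearity
using the commutative tree product merging the roots. -/
noncomputable def powCoef (coef : Odx Lp d → S.V → ℝ) (l : Dr) (α : Odx Lp d →₀ ℕ)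
    (σ : S.V) : ℝ :=
  ∑ᶠ g : Fin (Finsupp.toMultiset α).toList.length → S.V,
    (∏ r, coef ((Finsupp.toMultiset α).toList.get r) (g r)) *
      (if σ = S.merge l g then 1 else 0)

/-- The coefficient series of `Σ_{𝔩∈𝔇} F^𝔩_𝔱(U)·Ξ_𝔩`, where
`F^𝔩_𝔱(U)·Ξ_𝔩 = Σ_α (D^α F^𝔩_𝔱(u)/α!)·(U − u·𝟏)^α·Ξ_𝔩`. -/
noncomputable def lhsCoef [DecidableEq Lp] (F : Lp → Dr → FnO Lp d) (u : Odx Lp d → ℝ)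
    (coef : Odx Lp d → S.V → ℝ) (t : Lp) (σ : S.V) : ℝ :=
  ∑ᶠ l : Dr, ∑ᶠ α : Odx Lp d →₀ ℕ,
    Dexp α (F t l) u / (afact α : ℝ) * S.powCoef coef l α σ

/-- Defining recursion of the 𝔰-degree `|·|_𝔰` of decorated trees (with driver labels in
`𝔏₋ ⊔ {𝟎}`, encoded as `Option Lm` with `none = 𝟎`). -/
def DegSpec {Lm : Type} (S : TreeV Lp (Option Lm) d) (s : Fin (d+1) → ℝ)
    (degL : Lp → ℝ) (degLm : Lm → ℝ) (deg : S.V → ℝ) : Prop :=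
  ∀ (l : Option Lm) (k : MIdx d) (M : Multiset (Odx Lp d × S.V)),
    deg (S.node l k M) =
      l.elim 0 degLm + wdeg s k +
        ((M.map fun x => (degL x.1.1 - wdeg s x.1.2) + deg x.2).sum)

end TreeV

/-! ### The trees of `𝔅` -/

/-- Polynomial node-decoration factors `𝓘_{(𝔱,p)}[X^k]` with `p ≤ k` and `p ≠ k`;
an element is a pair `((𝔱,p), k)` subject to these constraints. -/
abbrev PolyDec (Lp : Type) (d : ℕ) :=
  {x : Odx Lp d × MIdx d // x.1.2 ≤ x.2 ∧ x.1.2 ≠ x.2}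

/-- Raise the polynomial exponent of a `PolyDec` by `e_i`. -/
def PolyDec.bump {Lp : Type} {d : ℕ} (pd : PolyDec Lp d) (i : Fin (d+1)) : PolyDec Lp d :=
  ⟨(pd.1.1, pd.1.2 + munit i), by
    constructor
    · exact fun j => le_trans (pd.2.1 j) (Nat.le_add_right _ _)
    · intro h
      have hi : pd.1.1.2 i ≤ pd.1.2 i := pd.2.1 i
      have h' : pd.1.1.2 i = pd.1.2 i + munit i i := congrFun h i
      simp only [munit, Pi.single_eq_same] at h'
      omega⟩

/-- The fresh polynomial decoration `𝓘_{(𝔱,p)}[X^{p+e_i}]`. -/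
def freshPD {Lp : Type} {d : ℕ} (o : Odx Lp d) (i : Fin (d+1)) : PolyDec Lp d :=
  ⟨(o, o.2 + munit i), by
    constructor
    · exact fun j => Nat.le_add_right _ _
    · intro h
      have h' : o.2 i = o.2 i + munit i i := congrFun h i
      simp only [munit, Pi.single_eq_same] at h'
      omega⟩

/-- Lower the polynomial exponent of a `PolyDec` by `e_i`. -/
def PolyDec.lower {Lp : Type} {d : ℕ} (pd : PolyDec Lp d) (i : Fin (d+1))
    (h : pd.1.1.2 + munit i ≤ pd.1.2) (hne : ¬ pd.1.2 - munit i = pd.1.1.2) : PolyDec Lp d :=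
  ⟨(pd.1.1, pd.1.2 - munit i), by
    constructor
    · intro j
      have hj := h j
      simp only [Pi.add_apply, Pi.sub_apply] at hj ⊢
      omega
    · exact fun hh => hne hh.symm⟩

/-- The set `𝔅` of decorated rooted trees with polynomial node decorations, presented
abstractly. -/
structure TreeB (Lp Dr : Type) (d : ℕ) where
  B : Type
  node : Dr → Multiset (PolyDec Lp d) → Multiset (Odx Lp d × B) → B
  node_bij : Function.Bijective
    (fun x : Dr × Multiset (PolyDec Lp d) × Multiset (Odx Lp d × B) => node x.1 x.2.1 x.2.2)
  ind : ∀ P : B → Prop,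
    (∀ l N (M : Multiset (Odx Lp d × B)), (∀ x ∈ M, P x.2) → P (node l N M)) → ∀ σ, P σ

namespace TreeB

variable {Lp Dr : Type} {d : ℕ} (S : TreeB Lp Dr d)

/-- Rebuild a tree after replacing the `j`-th branch by a linear combination of trees. -/
noncomputable def replace (l : Dr) (N : List (PolyDec Lp d)) (L : List (Odx Lp d × S.B))
    (j : Fin L.length) (w : S.B →₀ ℝ) : S.B →₀ ℝ :=
  w.sum fun σ' c => Finsupp.single (S.node l ↑N (↑(L.set j ((L.get j).1, σ')))) c

/-- Defining recursion of `Υ̊^F`. -/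
def UpsSpec [DecidableEq Lp] (F : Lp → Dr → FnO Lp d) (Ups : Lp → S.B → FnO Lp d) : Prop :=
  ∀ (t : Lp) (l : Dr) (N : List (PolyDec Lp d)) (L : List (Odx Lp d × S.B)),
    Ups t (S.node l ↑N ↑L) = fun x =>
      (∏ i : Fin N.length, x ((N.get i).1.1.1, (N.get i).1.2)) *
      (∏ j : Fin L.length, Ups (L.get j).1.1 (L.get j).2 x) *
      Dlist (N.map (fun pd => pd.1.1) ++ L.map Prod.fst) (F t l) x

/-- Defining recursion of the grafting operators `⋖_o` on `𝔅`. -/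
def GraftSpec (graft : Odx Lp d → S.B → S.B → (S.B →₀ ℝ)) : Prop :=
  ∀ (o : Odx Lp d) (σ' : S.B) (l : Dr) (N : List (PolyDec Lp d)) (L : List (Odx Lp d × S.B)),
    graft o σ' (S.node l ↑N ↑L) =
      Finsupp.single (S.node l ↑N ((o, σ') ::ₘ (↑L : Multiset _))) 1
      + (∑ j : Fin L.length, S.replace l N L j (graft o σ' (L.get j).2))
      + ∑ i : Fin N.length,
          (if o = ((N.get i).1.1.1, (N.get i).1.2) then
            Finsupp.single
              (S.node l ↑(N.eraseIdx i) (((N.get i).1.1, σ') ::ₘ (↑L : Multiset _))) 1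
          else 0)

/-- Defining recursion of the inner product on `𝔹`. -/
def IPSpec (ip : S.B → S.B → ℝ) : Prop :=
  ∀ (l l' : Dr) (N N' : List (PolyDec Lp d)) (L L' : List (Odx Lp d × S.B)),
    ip (S.node l ↑N ↑L) (S.node l' ↑N' ↑L') =
      (if l = l' then 1 else 0) *
      (∑ s : Fin N.length ≃ Fin N'.length,
        ∏ i : Fin N.length,
          (if (N.get i).1 = (N'.get (s i)).1 then
            (mfact ((N.get i).1.2 - (N.get i).1.1.2) : ℝ)
          else 0)) *
      ∑ s : Fin L.length ≃ Fin L'.length,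
        ∏ j : Fin L.length,
          (if (L.get j).1 = (L'.get (s j)).1 then ip (L.get j).2 (L'.get (s j)).2 else 0)

/-- Defining recursion of the raising operator `↑_i` on `𝔅`, producing a formal series
(represented by its coefficient function `𝔅 → ℝ`). -/
def RaiseSpec (raise : Fin (d+1) → S.B → (S.B → ℝ)) : Prop :=
  ∀ (i : Fin (d+1)) (l : Dr) (N : List (PolyDec Lp d)) (L : List (Odx Lp d × S.B)),
    raise i (S.node l ↑N ↑L) = fun σ'' =>
      (∑ ib : Fin N.length,
        (if σ'' = S.node l ↑(N.set ib ((N.get ib).bump i)) ↑L then 1 else 0))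
      + (if ∃ o : Odx Lp d, σ'' = S.node l (freshPD o i ::ₘ (↑N : Multiset _)) ↑L then 1 else 0)
      + ∑ j : Fin L.length,
          ∑ᶠ σ' : S.B,
            raise i (L.get j).2 σ' *
              (if σ'' = S.node l ↑N ↑(L.set j ((L.get j).1, σ')) then 1 else 0)

/-- Defining recursion of the lowering operator `↑*_i` on `𝔅`. -/
def LowSpec (low : Fin (d+1) → S.B → (S.B →₀ ℝ)) : Prop :=
  ∀ (i : Fin (d+1)) (l : Dr) (N : List (PolyDec Lp d)) (L : List (Odx Lp d × S.B)),
    low i (S.node l ↑N ↑L) =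
      (∑ ib : Fin N.length,
        (if h : (N.get ib).1.1.2 + munit i ≤ (N.get ib).1.2 then
          (((N.get ib).1.2 i - (N.get ib).1.1.2 i : ℕ) : ℝ) •
            (if he : (N.get ib).1.2 - munit i = (N.get ib).1.1.2 then
              Finsupp.single (S.node l ↑(N.eraseIdx ib) ↑L) 1
            else
              Finsupp.single (S.node l ↑(N.set ib ((N.get ib).lower i h he)) ↑L) 1)
        else 0))
      + ∑ j : Fin L.length, S.replace l N L j (low i (L.get j).2)

/-- Defining recursion of the cutting operator `⋖*_o : 𝔹 → 𝔹 ⊗ 𝔹` (elements of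
`𝔹 ⊗ 𝔹` represented as finitely supported functions on pairs of trees, a pair
`(branch, trunk)` recording a cut). -/
def CutSpec (cut : Odx Lp d → S.B → (S.B × S.B →₀ ℝ)) : Prop :=
  ∀ (t : Lp) (p : MIdx d) (l : Dr) (N : List (PolyDec Lp d)) (L : List (Odx Lp d × S.B)),
    cut (t, p) (S.node l ↑N ↑L) =
      (∑ j : Fin L.length,
        (if hc : (L.get j).1.1 = t ∧ (L.get j).1.2 ≤ p then
          ((mfact (p - (L.get j).1.2) : ℝ))⁻¹ •
            Finsupp.single ((L.get j).2,
              S.node l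
                (if he : (L.get j).1.2 = p then (↑N : Multiset (PolyDec Lp d))
                 else (⟨((L.get j).1, p), hc.2, he⟩ ::ₘ (↑N : Multiset (PolyDec Lp d))))
                ↑(L.eraseIdx j)) 1
        else 0))
      + ∑ j : Fin L.length,
          (cut (t, p) (L.get j).2).sum fun ab c =>
            Finsupp.single (ab.1, S.node l ↑N ↑(L.set j ((L.get j).1, ab.2))) c

end TreeB

/-- Defining recursion of the map `Q : 𝔹 → 𝕍` collapsing polynomial decorations. -/
def QSpec {Lp Dr : Type} {d : ℕ} (SB : TreeB Lp Dr d) (SV : TreeV Lp Dr d)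
    (Qf : SB.B → SV.V) : Prop :=
  ∀ (l : Dr) (N : Multiset (PolyDec Lp d)) (M : Multiset (Odx Lp d × SB.B)),
    Qf (SB.node l N M) =
      SV.node l ((N.map fun pd => pd.1.2 - pd.1.1.2).sum) (M.map fun x => (x.1, Qf x.2))

/-- The generic summand of the multivariate Faà di Bruno formula, indexed by `(r, q⃗, m⃗)`;
it vanishes unless `(q⃗, m⃗) ∈ I(r,k)`. -/
noncomputable def fdbSummand {Lp : Type} {d : ℕ} [DecidableEq Lp] (lo : LinearOrder (MIdx d))
    (F : FnO Lp d) (k : MIdx d)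
    (p : Σ r : ℕ, (Fin r → MIdx d) × (Fin r → (Odx Lp d →₀ ℕ))) : FnO Lp d :=
  if (∀ j, p.2.2 j ≠ 0) ∧ (∀ j j' : Fin p.1, j < j' → lo.lt (p.2.1 j) (p.2.1 j')) ∧
      (∀ j, lo.lt 0 (p.2.1 j)) ∧ (∑ j, ((p.2.2 j).sum fun _ n => n) • p.2.1 j) = k then
    fun x =>
      (∏ j, (p.2.2 j).prod fun o n =>
        (x (o.1, o.2 + p.2.1 j) / (mfact (p.2.1 j) : ℝ)) ^ n / (Nat.factorial n : ℝ)) *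
        Dexp (∑ j, p.2.2 j) F x
  else 0

/-! ### Generic decorated trees -/

/-- Decorated rooted trees over node species `N` and edge species `E`,
presented abstractly. -/
structure GTree (N E : Type) where
  T : Type
  node : N → Multiset (E × T) → T
  node_bij : Function.Bijective (fun x : N × Multiset (E × T) => node x.1 x.2)
  ind : ∀ P : T → Prop, (∀ Y M, (∀ x ∈ M, P x.2) → P (node Y M)) → ∀ τ, P τ

namespace GTree

/-- Multilinear expansion of a list of edge-decorated linear combinations of trees into a
linear combination of branch multisets. -/
noncomputable def expandAux {N E : Type} (S : GTree N E) :
    List (E × (S.T →₀ ℝ)) → (Multiset (E × S.T) →₀ ℝ)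
  | [] => Finsupp.single 0 1
  | (e, w) :: L =>
      w.sum fun τ' c => (S.expandAux L).sum fun M c' => Finsupp.single ((e, τ') ::ₘ M) (c * c')

/-- Defining recursion of the functorial extension `𝔗(A)` of a linear map `A` between
the free vector spaces on the node species. -/
def MapSpec {N N' E : Type} (S : GTree N E) (S' : GTree N' E)
    (A : N → (N' →₀ ℝ)) (TA : S.T → (S'.T →₀ ℝ)) : Prop :=
  ∀ (Y : N) (L : List (E × S.T)),
    TA (S.node Y ↑L) =
      (A Y).sum fun Y' c =>
        (S'.expandAux (L.map fun x => (x.1, TA x.2))).sum fun M c' =>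
          Finsupp.single (S'.node Y' M) (c * c')

/-- Defining recursion of the inner product on `𝔗(𝖭,𝖤)` induced by an inner product on
the node species. -/
def IPSpec {N E : Type} (S : GTree N E) (ipN : N → N → ℝ) (ip : S.T → S.T → ℝ) : Prop :=
  ∀ (Y Y' : N) (L L' : List (E × S.T)),
    ip (S.node Y ↑L) (S.node Y' ↑L') =
      ipN Y Y' * ∑ s : Fin L.length ≃ Fin L'.length,
        ∏ j : Fin L.length,
          (if (L.get j).1 = (L'.get (s j)).1 then ip (L.get j).2 (L'.get (s j)).2 else 0)

end GTree

/-! ### Auxiliary lemmas for statement2 -/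

section AuxCalc

theorem aux_one_le_top : ((⊤ : ℕ∞) : WithTop ℕ∞) ≠ 0 := by simp
theorem aux_top_add_one_le :
    ((⊤ : ℕ∞) : WithTop ℕ∞) + 1 ≤ ((⊤ : ℕ∞) : WithTop ℕ∞) := by norm_cast

variable {ι : Type*} [Fintype ι] [DecidableEq ι]

/-- Partial derivative on a finite-dimensional coordinate space. -/
noncomputable def pdAux (j : ι) (g : (ι → ℝ) → ℝ) (z : ι → ℝ) : ℝ :=
  deriv (fun t : ℝ => g (Function.update z j t)) (z j)

theorem pdAux_eq_fderiv {g : (ι → ℝ) → ℝ} (hg : Differentiable ℝ g) (j : ι) (z : ι → ℝ) :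
    pdAux j g z = fderiv ℝ g z (Pi.single j 1) := by
  have h1 : HasDerivAt (fun t : ℝ => g (Function.update z j t))
      (fderiv ℝ g (Function.update z j (z j)) (Pi.single j 1)) (z j) :=
    (hg _).hasFDerivAt.comp_hasDerivAt (z j) (hasDerivAt_update z j (z j))
  rw [Function.update_eq_self] at h1
  exact h1.deriv

theorem contDiff_pdAux {g : (ι → ℝ) → ℝ} (hg : ContDiff ℝ (⊤ : ℕ∞) g) (j : ι) :
    ContDiff ℝ (⊤ : ℕ∞) (pdAux j g) := by
  have hd : Differentiable ℝ g := hg.differentiable aux_one_le_top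
  have : pdAux j g = fun z => (ContinuousLinearMap.apply ℝ ℝ (Pi.single j 1)) (fderiv ℝ g z) := by
    funext z; exact pdAux_eq_fderiv hd j z
  rw [this]
  exact (ContinuousLinearMap.apply ℝ ℝ (Pi.single j 1)).contDiff.comp
    (hg.fderiv_right aux_top_add_one_le)

theorem pdAux_comm {g : (ι → ℝ) → ℝ} (hg : ContDiff ℝ (⊤ : ℕ∞) g) (j j' : ι) :
    pdAux j (pdAux j' g) = pdAux j' (pdAux j g) := by
  have hd : Differentiable ℝ g := hg.differentiable aux_one_le_top
  have hfd : ContDiff ℝ (⊤ : ℕ∞) (fderiv ℝ g) := hg.fderiv_right aux_top_add_one_le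
  have key : ∀ a b : ι, ∀ z : ι → ℝ,
      pdAux a (pdAux b g) z = fderiv ℝ (fderiv ℝ g) z (Pi.single a 1) (Pi.single b 1) := by
    intro a b z
    rw [pdAux_eq_fderiv ((contDiff_pdAux hg b).differentiable aux_one_le_top) a z]
    have hrepr : pdAux b g = fun z =>
        (ContinuousLinearMap.apply ℝ ℝ (Pi.single b 1)) (fderiv ℝ g z) := by
      funext z; exact pdAux_eq_fderiv hd b z
    rw [hrepr]
    have hcomp : fderiv ℝ ((ContinuousLinearMap.apply ℝ ℝ (Pi.single b 1)) ∘
        (fderiv ℝ g)) z = (ContinuousLinearMap.apply ℝ ℝ (Pi.single b 1)).comp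
          (fderiv ℝ (fderiv ℝ g) z) :=
      ((ContinuousLinearMap.apply ℝ ℝ (Pi.single b 1)).hasFDerivAt.comp z
        ((hfd.differentiable aux_one_le_top z).hasFDerivAt)).fderiv
    rw [show (fun z => (ContinuousLinearMap.apply ℝ ℝ (Pi.single b 1)) (fderiv ℝ g z))
      = (ContinuousLinearMap.apply ℝ ℝ (Pi.single b 1)) ∘ (fderiv ℝ g) from rfl, hcomp]
    rfl
  rw [funext (key j j'), funext (key j' j)]
  funext z
  have hsym : IsSymmSndFDerivAt ℝ g z := (hg.contDiffAt).isSymmSndFDerivAt (by rw [minSmoothness_of_isRCLikeNormedField]; norm_cast)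
  exact hsym _ _

end AuxCalc

section AuxSmooth

variable {Lp : Type} {d : ℕ} [DecidableEq Lp]

theorem aux_contDiff_restrict {s s' : Finset (Odx Lp d)} (h : s ⊆ s') :
    ContDiff ℝ (⊤ : ℕ∞) (fun (z : ↥s' → ℝ) (o : ↥s) => z ⟨o.1, h o.2⟩) :=
  contDiff_pi.mpr fun _ => contDiff_apply _ _ _

theorem IsSmoothCO.superset {F : FnO Lp d} (hF : IsSmoothCO F) (s₀ : Finset (Odx Lp d)) :
    ∃ (s : Finset (Odx Lp d)) (g : (↥s → ℝ) → ℝ), s₀ ⊆ s ∧ ContDiff ℝ (⊤ : ℕ∞) g ∧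
      ∀ x, F x = g fun o => x o.1 := by
  obtain ⟨s, g, hg, hrep⟩ := hF
  exact ⟨s ∪ s₀, fun z => g (fun o => z ⟨o.1, Finset.mem_union_left _ o.2⟩),
    Finset.subset_union_right, hg.comp (aux_contDiff_restrict Finset.subset_union_left),
    fun x => hrep x⟩

theorem aux_dpart_repr {s : Finset (Odx Lp d)} (g : (↥s → ℝ) → ℝ) (o : Odx Lp d) :
    Dpart o (fun x => g fun i => x i.1) =
      if h : o ∈ s then (fun x => pdAux (⟨o, h⟩ : ↥s) g (fun i => x i.1)) else (0 : FnO Lp d) := by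
  funext x
  show deriv (fun t => g fun i : ↥s => Function.update x o t i.1) (x o) = _
  split_ifs with h
  · have hupd : ∀ t, (fun i : ↥s => Function.update x o t i.1)
        = Function.update (fun i : ↥s => x i.1) ⟨o, h⟩ t := by
      intro t; funext i
      rw [Function.update_apply, Function.update_apply]
      by_cases hi : i = (⟨o, h⟩ : ↥s)
      · rw [if_pos hi, if_pos]; subst hi; rfl
      · rw [if_neg hi, if_neg (fun hc => hi (Subtype.ext hc))]
    simp only [hupd]
    rfl
  · have hupd : ∀ t, (fun i : ↥s => Function.update x o t i.1) = fun i : ↥s => x i.1 := by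
      intro t; funext i
      have hne : (i.1 : Odx Lp d) ≠ o := fun hc => h (hc ▸ i.2)
      exact Function.update_of_ne hne _ _
    simp only [hupd]
    exact deriv_const _ _

theorem aux_smooth_zero : IsSmoothCO (0 : FnO Lp d) :=
  ⟨∅, fun _ => 0, contDiff_const, fun _ => rfl⟩

theorem aux_smooth_const (c : ℝ) : IsSmoothCO (fun _ : (Odx Lp d → ℝ) => c) :=
  ⟨∅, fun _ => c, contDiff_const, fun _ => rfl⟩

theorem IsSmoothCO.dpart {F : FnO Lp d} (hF : IsSmoothCO F) (o : Odx Lp d) :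
    IsSmoothCO (Dpart o F) := by
  obtain ⟨s, g, hg, hrep⟩ := hF
  have : F = fun x => g fun i => x i.1 := funext hrep
  rw [this, aux_dpart_repr g o]
  split_ifs with h
  · exact ⟨s, pdAux ⟨o, h⟩ g, contDiff_pdAux hg _, fun _ => rfl⟩
  · exact aux_smooth_zero

theorem aux_dpart_comm {F : FnO Lp d} (hF : IsSmoothCO F) (o o' : Odx Lp d) :
    Dpart o (Dpart o' F) = Dpart o' (Dpart o F) := by
  obtain ⟨s, g, hs, hg, hrep⟩ := hF.superset {o, o'}
  have ho : o ∈ s := hs (by simp)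
  have ho' : o' ∈ s := hs (by simp)
  have hFe : F = fun x => g fun i => x i.1 := funext hrep
  rw [hFe]
  rw [aux_dpart_repr g o, aux_dpart_repr g o', dif_pos ho, dif_pos ho',
    aux_dpart_repr (pdAux ⟨o, ho⟩ g) o', aux_dpart_repr (pdAux ⟨o', ho'⟩ g) o,
    dif_pos ho, dif_pos ho']
  have := pdAux_comm hg (⟨o, ho⟩ : ↥s) (⟨o', ho'⟩ : ↥s)
  funext x
  rw [show pdAux ⟨o', ho'⟩ (pdAux (⟨o, ho⟩ : ↥s) g) = pdAux ⟨o, ho⟩ (pdAux ⟨o', ho'⟩ g) from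
    (pdAux_comm hg _ _)]

theorem aux_diff_update {F : FnO Lp d} (hF : IsSmoothCO F) (x : Odx Lp d → ℝ) (o : Odx Lp d)
    (t0 : ℝ) : DifferentiableAt ℝ (fun t : ℝ => F (Function.update x o t)) t0 := by
  obtain ⟨s, g, hg, hrep⟩ := hF
  simp only [hrep]
  by_cases h : o ∈ s
  · have hupd : ∀ t, (fun i : ↥s => Function.update x o t i.1)
        = Function.update (fun i : ↥s => x i.1) ⟨o, h⟩ t := by
      intro t; funext i
      rw [Function.update_apply, Function.update_apply]
      by_cases hi : i = (⟨o, h⟩ : ↥s)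
      · rw [if_pos hi, if_pos]; subst hi; rfl
      · rw [if_neg hi, if_neg (fun hc => hi (Subtype.ext hc))]
    simp only [hupd]
    exact ((hg.differentiable aux_one_le_top _).hasFDerivAt.comp_hasDerivAt _
      (hasDerivAt_update _ _ _)).differentiableAt
  · have hupd : ∀ t, (fun i : ↥s => Function.update x o t i.1) = fun i : ↥s => x i.1 := by
      intro t; funext i
      have hne : (i.1 : Odx Lp d) ≠ o := fun hc => h (hc ▸ i.2)
      exact Function.update_of_ne hne _ _
    simp only [hupd]
    exact differentiableAt_const _

theorem aux_dpart_mul {F G : FnO Lp d} (hF : IsSmoothCO F) (hG : IsSmoothCO G) (o : Odx Lp d) :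
    Dpart o (fun x => F x * G x) = fun x => Dpart o F x * G x + F x * Dpart o G x := by
  funext x
  show deriv (fun t => F (Function.update x o t) * G (Function.update x o t)) (x o) = _
  rw [deriv_fun_mul (aux_diff_update hF x o (x o)) (aux_diff_update hG x o (x o)),
    Function.update_eq_self]
  rfl

theorem aux_dpart_const (c : ℝ) (o : Odx Lp d) :
    Dpart o (fun _ : (Odx Lp d → ℝ) => c) = fun _ => 0 := by
  funext x
  show deriv (fun _ : ℝ => c) (x o) = 0
  exact deriv_const _ _

theorem aux_smooth_Xc (o : Odx Lp d) : IsSmoothCO (Xc o) :=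
  ⟨{o}, fun z => z ⟨o, Finset.mem_singleton_self o⟩, contDiff_apply _ _ _, fun _ => rfl⟩

theorem aux_dpart_Xc (o o' : Odx Lp d) :
    Dpart o' (Xc o) = fun _ => if o = o' then 1 else 0 := by
  funext x
  show deriv (fun t => Function.update x o' t o) (x o') = _
  by_cases h : o = o'
  · subst h
    simpa using deriv_id (x o)
  · simp only [Function.update_of_ne h]
    rw [if_neg h]
    exact deriv_const _ _

theorem aux_smooth_mul {F G : FnO Lp d} (hF : IsSmoothCO F) (hG : IsSmoothCO G) :
    IsSmoothCO (fun x => F x * G x) := by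
  obtain ⟨s₁, g₁, hg₁, hr₁⟩ := hF
  obtain ⟨s₂, g₂, hg₂, hr₂⟩ := hG
  refine ⟨s₁ ∪ s₂, fun z => g₁ (fun o => z ⟨o.1, Finset.mem_union_left _ o.2⟩) *
    g₂ (fun o => z ⟨o.1, Finset.mem_union_right _ o.2⟩), ?_, fun x => by
      show F x * G x = _
      rw [hr₁ x, hr₂ x]⟩
  exact (hg₁.comp (aux_contDiff_restrict Finset.subset_union_left)).mul
    (hg₂.comp (aux_contDiff_restrict Finset.subset_union_right))

theorem aux_smooth_add {F G : FnO Lp d} (hF : IsSmoothCO F) (hG : IsSmoothCO G) :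
    IsSmoothCO (fun x => F x + G x) := by
  obtain ⟨s₁, g₁, hg₁, hr₁⟩ := hF
  obtain ⟨s₂, g₂, hg₂, hr₂⟩ := hG
  refine ⟨s₁ ∪ s₂, fun z => g₁ (fun o => z ⟨o.1, Finset.mem_union_left _ o.2⟩) +
    g₂ (fun o => z ⟨o.1, Finset.mem_union_right _ o.2⟩), ?_, fun x => by
      show F x + G x = _
      rw [hr₁ x, hr₂ x]⟩
  exact (hg₁.comp (aux_contDiff_restrict Finset.subset_union_left)).add
    (hg₂.comp (aux_contDiff_restrict Finset.subset_union_right))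

theorem aux_smooth_finprod {ι : Type*} (s : Finset ι) (G : ι → FnO Lp d)
    (h : ∀ i ∈ s, IsSmoothCO (G i)) : IsSmoothCO (fun x => ∏ i ∈ s, G i x) := by
  classical
  induction s using Finset.induction_on with
  | empty => simpa using aux_smooth_const 1
  | @insert a s hne ih =>
    simp only [Finset.prod_insert hne]
    exact aux_smooth_mul (h a (Finset.mem_insert_self _ _))
      (ih fun i hi => h i (Finset.mem_insert_of_mem hi))

theorem aux_smooth_finsum {ι : Type*} (s : Finset ι) (G : ι → FnO Lp d)
    (h : ∀ i ∈ s, IsSmoothCO (G i)) : IsSmoothCO (fun x => ∑ i ∈ s, G i x) := by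
  classical
  induction s using Finset.induction_on with
  | empty => simpa using aux_smooth_const 0
  | @insert a s hne ih =>
    simp only [Finset.sum_insert hne]
    exact aux_smooth_add (h a (Finset.mem_insert_self _ _))
      (ih fun i hi => h i (Finset.mem_insert_of_mem hi))

theorem aux_smooth_pow {F : FnO Lp d} (hF : IsSmoothCO F) (n : ℕ) :
    IsSmoothCO (fun x => F x ^ n) := by
  induction n with
  | zero => simpa using aux_smooth_const 1
  | succ n ih =>
    simp only [pow_succ]
    exact aux_smooth_mul ih hF

theorem aux_smooth_Xpow (α : Odx Lp d →₀ ℕ) : IsSmoothCO (Xpow α) := by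
  show IsSmoothCO (fun x => ∏ o ∈ α.support, (fun x => Xc o x ^ α o) x)
  exact aux_smooth_finprod _ _ (fun o _ => aux_smooth_pow (aux_smooth_Xc o) (α o))

theorem aux_smooth_of_IsP {Om Op : Set (Odx Lp d)} {F : FnO Lp d} (hF : IsP Om Op F) :
    IsSmoothCO F := by
  obtain ⟨m, α, G, -, -, hsm, -, -, rfl⟩ := hF
  exact aux_smooth_finsum Finset.univ
    (fun j => fun x => G j x * Xpow (α j) x)
    (fun j _ => aux_smooth_mul (hsm j) (aux_smooth_Xpow (α j)))

end AuxSmooth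

section AuxList

theorem aux_fin_prod_list {α : Type*} (L : List α) (f : α → ℝ) :
    ∏ i : Fin L.length, f (L.get i) = (L.map f).prod := by
  induction L with
  | nil => simp
  | cons a L ih =>
    rw [show ∏ i : Fin (a :: L).length, f ((a :: L).get i)
        = ∏ i : Fin (L.length + 1), f ((a :: L).get i) from rfl,
      Fin.prod_univ_succ]
    simp only [List.map_cons, List.prod_cons]
    rw [show (∏ i : Fin L.length, f ((a :: L).get i.succ)) = ∏ i : Fin L.length, f (L.get i)
      from Finset.prod_congr rfl fun i _ => rfl, ih]
    rfl

theorem aux_prod_set {α : Type*} (L : List α) (j : ℕ) (h : j < L.length) (b : α) (f : α → ℝ) :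
    ((L.set j b).map f).prod = f b * ((L.eraseIdx j).map f).prod := by
  rw [List.set_eq_take_cons_drop b h, List.eraseIdx_eq_take_drop_succ]
  simp [List.prod_append]
  ring

theorem aux_cons_eraseIdx {α : Type*} (L : List α) (j : ℕ) (h : j < L.length) :
    L = L.take j ++ L[j] :: L.drop (j + 1) := by
  rw [List.getElem_cons_drop h, List.take_append_drop]

theorem aux_perm_get_eraseIdx {α : Type*} (L : List α) (j : ℕ) (h : j < L.length) :
    (L[j] :: L.eraseIdx j).Perm L := by
  rw [List.eraseIdx_eq_take_drop_succ]
  refine List.Perm.trans List.perm_middle.symm ?_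
  rw [← aux_cons_eraseIdx L j h]

theorem aux_map_fst_set {α β : Type*} (L : List (α × β)) (j : ℕ) (h : j < L.length) (b : β) :
    (L.set j ((L[j]).1, b)).map Prod.fst = L.map Prod.fst := by
  rw [List.map_set]
  apply List.ext_getElem
  · simp [List.length_set]
  · intro n h1 h2
    rw [List.getElem_set]
    split_ifs with hjn
    · subst hjn
      rw [List.getElem_map]
    · rfl

end AuxList

section AuxLC

noncomputable def evF {β : Type*} (f : β → ℝ) (w : β →₀ ℝ) : ℝ :=
  Finsupp.linearCombination ℝ f w

theorem aux_sum_eq_evF {β : Type*} (f : β → ℝ) (w : β →₀ ℝ) :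
    (w.sum fun σ c => c * f σ) = evF f w := by
  rw [evF, Finsupp.linearCombination_apply]
  simp [Finsupp.sum, smul_eq_mul]

theorem aux_evF_single {β : Type*} (f : β → ℝ) (a : β) (c : ℝ) :
    evF f (Finsupp.single a c) = c * f a := by
  rw [evF, Finsupp.linearCombination_single, smul_eq_mul]

theorem aux_evF_zero {β : Type*} (f : β → ℝ) : evF f 0 = 0 := by
  simp [evF]

theorem aux_evF_add {β : Type*} (f : β → ℝ) (w w' : β →₀ ℝ) :
    evF f (w + w') = evF f w + evF f w' := by
  simp [evF]

theorem aux_evF_finsum {β ι : Type*} (f : β → ℝ) (s : Finset ι) (w : ι → (β →₀ ℝ)) :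
    evF f (∑ j ∈ s, w j) = ∑ j ∈ s, evF f (w j) := by
  simp [evF]

theorem aux_evF_mapDomain {β γ : Type*} (f : γ → ℝ) (h : β → γ) (w : β →₀ ℝ) :
    evF f (Finsupp.mapDomain h w) = evF (fun a => f (h a)) w := by
  rw [evF, evF, Finsupp.linearCombination_mapDomain]
  rfl

theorem aux_evF_mul_left {β : Type*} (f : β → ℝ) (a : ℝ) (w : β →₀ ℝ) :
    evF (fun σ => a * f σ) w = a * evF f w := by
  rw [evF, evF, Finsupp.linearCombination_apply, Finsupp.linearCombination_apply,
    Finsupp.sum, Finsupp.sum, Finset.mul_sum]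
  exact Finset.sum_congr rfl fun σ _ => by rw [smul_eq_mul, smul_eq_mul]; ring

end AuxLC

section AuxDlist

variable {Lp : Type} {d : ℕ} [DecidableEq Lp]

theorem aux_dlist_cons (a : Odx Lp d) (M : List (Odx Lp d)) (F : FnO Lp d) :
    Dlist (a :: M) F = Dpart a (Dlist M F) := rfl

theorem aux_smooth_dlist (M : List (Odx Lp d)) {F : FnO Lp d} (hF : IsSmoothCO F) :
    IsSmoothCO (Dlist M F) := by
  induction M with
  | nil => exact hF
  | cons a M ih => exact ih.dpart a

theorem aux_dlist_perm {M M' : List (Odx Lp d)} (h : M.Perm M') :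
    ∀ {F : FnO Lp d}, IsSmoothCO F → Dlist M F = Dlist M' F := by
  induction h with
  | nil => intro F _; rfl
  | cons a h ih =>
    intro F hF
    rw [aux_dlist_cons, aux_dlist_cons, ih hF]
  | swap a b l =>
    intro F hF
    rw [aux_dlist_cons, aux_dlist_cons, aux_dlist_cons, aux_dlist_cons]
    exact aux_dpart_comm (aux_smooth_dlist l hF) b a
  | trans h1 h2 ih1 ih2 =>
    intro F hF
    rw [ih1 hF, ih2 hF]

theorem aux_smooth_listprod {α : Type*} (L : List α) (G : α → FnO Lp d)
    (h : ∀ a ∈ L, IsSmoothCO (G a)) :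
    IsSmoothCO (fun x => (L.map fun a => G a x).prod) := by
  induction L with
  | nil => simpa using aux_smooth_const 1
  | cons a L ih =>
    simp only [List.map_cons, List.prod_cons]
    exact aux_smooth_mul (h a (List.mem_cons_self))
      (ih fun a ha => h a (List.mem_cons_of_mem _ ha))

theorem aux_dpart_list_prod {α : Type*} (o : Odx Lp d) :
    ∀ (L : List α) (G : α → FnO Lp d), (∀ a ∈ L, IsSmoothCO (G a)) →
      Dpart o (fun x => (L.map fun a => G a x).prod) =
        fun x => ∑ j : Fin L.length,
          Dpart o (G (L.get j)) x * ((L.eraseIdx j).map fun a => G a x).prod := by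
  intro L
  induction L with
  | nil =>
    intro G _
    rw [show (fun x : (Odx Lp d → ℝ) => (List.map (fun a => G a x) []).prod)
      = fun _ => (1 : ℝ) from rfl, aux_dpart_const]
    funext x
    simp
  | cons a L ih =>
    intro G h
    have e : (fun x => ((a :: L).map fun a' => G a' x).prod)
        = fun x => G a x * (L.map fun a' => G a' x).prod := by
      funext x; simp
    rw [e, aux_dpart_mul (h a (List.mem_cons_self))
      (aux_smooth_listprod L G fun a' ha => h a' (List.mem_cons_of_mem _ ha)) o,
      ih G fun a' ha => h a' (List.mem_cons_of_mem _ ha)]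
    funext x
    rw [show ∑ j : Fin (a :: L).length, Dpart o (G ((a :: L).get j)) x *
        (((a :: L).eraseIdx j).map fun a' => G a' x).prod
      = ∑ j : Fin (L.length + 1), Dpart o (G ((a :: L).get j)) x *
        (((a :: L).eraseIdx j).map fun a' => G a' x).prod from rfl,
      Fin.sum_univ_succ]
    congr 1
    rw [Finset.mul_sum]
    refine Finset.sum_congr rfl fun j _ => ?_
    rw [show (a :: L).get j.succ = L.get j from rfl,
      show (a :: L).eraseIdx j.succ = a :: L.eraseIdx j from rfl]
    simp only [List.map_cons, List.prod_cons]
    ring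

end AuxDlist

/-- Lemma `lem:graftMorphism`, first identity: the grafting morphism
property of `Υ̊`: `Υ̊^F[σ̃ ⋖_o σ] = Υ̊^F[σ̃] ◁_o Υ̊^F[σ]`, i.e. componentwise
`Υ̊^F_𝔟[σ̃ ⋖_o σ] = Υ̊^F_{o.1}[σ̃] · D_o Υ̊^F_𝔟[σ]`, where `Υ̊^F` is extended linearly. -/
theorem statement2
    {d : ℕ} {Lp Dr : Type} [Fintype Lp] [DecidableEq Lp]
    (Om Op : Set (Odx Lp d))
    (hdisj : ∀ o, ¬(o ∈ Om ∧ o ∈ Op)) (hcover : ∀ o, o ∈ Om ∨ o ∈ Op)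
    (F : Lp → Dr → FnO Lp d) (hF : ∀ t l, IsP Om Op (F t l))
    (SB : TreeB Lp Dr d)
    (UpsB : Lp → SB.B → FnO Lp d) (hUpsB : SB.UpsSpec F UpsB)
    (graftB : Odx Lp d → SB.B → SB.B → (SB.B →₀ ℝ)) (hgraftB : SB.GraftSpec graftB) :
    ∀ (o : Odx Lp d) (σt σ : SB.B) (b : Lp),
      (fun x => (graftB o σt σ).sum fun σ'' c => c * UpsB b σ'' x) =
        fun x => UpsB o.1 σt x * Dpart o (UpsB b σ) x := by
  classical
  have hsmF : ∀ t l, IsSmoothCO (F t l) := fun t l => aux_smooth_of_IsP (hF t l)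
  have upsForm : ∀ (b : Lp) (l : Dr) (N : List (PolyDec Lp d)) (L : List (Odx Lp d × SB.B)),
      UpsB b (SB.node l ↑N ↑L) = fun x =>
        (N.map fun pd => Xc (pd.1.1.1, pd.1.2) x).prod *
        (L.map fun a => UpsB a.1.1 a.2 x).prod *
        Dlist (N.map (fun pd => pd.1.1) ++ L.map Prod.fst) (F b l) x := by
    intro b l N L
    rw [hUpsB b l N L]
    funext x
    show (∏ i : Fin N.length, x ((N.get i).1.1.1, (N.get i).1.2)) *
        (∏ j : Fin L.length, UpsB (L.get j).1.1 (L.get j).2 x) *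
        Dlist (N.map (fun pd => pd.1.1) ++ L.map Prod.fst) (F b l) x = _
    rw [show (∏ i : Fin N.length, x ((N.get i).1.1.1, (N.get i).1.2))
        = (N.map fun pd => Xc (pd.1.1.1, pd.1.2) x).prod from aux_fin_prod_list N (fun pd => Xc (pd.1.1.1, pd.1.2) x),
      show (∏ j : Fin L.length, UpsB (L.get j).1.1 (L.get j).2 x)
        = (L.map fun a => UpsB a.1.1 a.2 x).prod from aux_fin_prod_list L (fun a => UpsB a.1.1 a.2 x)]
  have hsmU : ∀ σ : SB.B, ∀ b : Lp, IsSmoothCO (UpsB b σ) := by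
    refine SB.ind _ ?_
    intro l N M ih b
    obtain ⟨N, rfl⟩ : ∃ N' : List (PolyDec Lp d), (↑N' : Multiset (PolyDec Lp d)) = N :=
      ⟨N.toList, Multiset.coe_toList N⟩
    obtain ⟨L, rfl⟩ : ∃ L' : List (Odx Lp d × SB.B), (↑L' : Multiset (Odx Lp d × SB.B)) = M :=
      ⟨M.toList, Multiset.coe_toList M⟩
    rw [upsForm b l N L]
    exact aux_smooth_mul (aux_smooth_mul
      (aux_smooth_listprod N (fun pd => Xc (pd.1.1.1, pd.1.2)) fun pd _ => aux_smooth_Xc _)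
      (aux_smooth_listprod L (fun a => UpsB a.1.1 a.2)
        fun a ha => ih a (Multiset.mem_coe.mpr ha) a.1.1))
      (aux_smooth_dlist _ (hsmF b l))
  have main : ∀ σ : SB.B, ∀ (o : Odx Lp d) (σt : SB.B) (b : Lp),
      (fun x => (graftB o σt σ).sum fun σ'' c => c * UpsB b σ'' x) =
        fun x => UpsB o.1 σt x * Dpart o (UpsB b σ) x := by
    refine SB.ind _ ?_
    intro l N M ih o σt b
    obtain ⟨N, rfl⟩ : ∃ N' : List (PolyDec Lp d), (↑N' : Multiset (PolyDec Lp d)) = N :=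
      ⟨N.toList, Multiset.coe_toList N⟩
    obtain ⟨L, rfl⟩ : ∃ L' : List (Odx Lp d × SB.B), (↑L' : Multiset (Odx Lp d × SB.B)) = M :=
      ⟨M.toList, Multiset.coe_toList M⟩
    funext x
    show ((graftB o σt (SB.node l ↑N ↑L)).sum fun σ'' c => c * UpsB b σ'' x)
      = UpsB o.1 σt x * Dpart o (UpsB b (SB.node l ↑N ↑L)) x
    -- smoothness of the three factors
    have hA : IsSmoothCO (fun x => (N.map fun pd => Xc (pd.1.1.1, pd.1.2) x).prod) :=
      aux_smooth_listprod N (fun pd => Xc (pd.1.1.1, pd.1.2)) fun pd _ => aux_smooth_Xc _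
    have hB : IsSmoothCO (fun x => (L.map fun a => UpsB a.1.1 a.2 x).prod) :=
      aux_smooth_listprod L (fun a => UpsB a.1.1 a.2) fun a _ => hsmU a.2 a.1.1
    have hC : IsSmoothCO (Dlist (N.map (fun pd => pd.1.1) ++ L.map Prod.fst) (F b l)) := aux_smooth_dlist _ (hsmF b l)
    -- Term 1
    have hT1 : evF (fun σ'' => UpsB b σ'' x)
        (Finsupp.single (SB.node l ↑N ((o, σt) ::ₘ ↑L)) 1)
        = (N.map fun pd => Xc (pd.1.1.1, pd.1.2) x).prod * (UpsB o.1 σt x * (L.map fun a => UpsB a.1.1 a.2 x).prod) * Dpart o (Dlist (N.map (fun pd => pd.1.1) ++ L.map Prod.fst) (F b l)) x := by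
      rw [aux_evF_single, one_mul, Multiset.cons_coe, upsForm b l N ((o, σt) :: L)]
      show (N.map fun pd => Xc (pd.1.1.1, pd.1.2) x).prod * (((o, σt) :: L).map fun a => UpsB a.1.1 a.2 x).prod *
        Dlist (N.map (fun pd => pd.1.1) ++ ((o, σt) :: L).map Prod.fst) (F b l) x = _
      rw [show (((o, σt) :: L).map fun a => UpsB a.1.1 a.2 x).prod
          = UpsB o.1 σt x * (L.map fun a => UpsB a.1.1 a.2 x).prod from by simp,
        show Dlist (N.map (fun pd => pd.1.1) ++ ((o, σt) :: L).map Prod.fst) (F b l)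
          = Dpart o (Dlist (N.map (fun pd => pd.1.1) ++ L.map Prod.fst) (F b l)) from
            aux_dlist_perm List.perm_middle (hsmF b l)]
    -- Term 2
    have hT2 : ∀ j : Fin L.length,
        evF (fun σ'' => UpsB b σ'' x) (SB.replace l N L j (graftB o σt (L.get j).2))
        = (N.map fun pd => Xc (pd.1.1.1, pd.1.2) x).prod * ((L.eraseIdx (↑j)).map fun a => UpsB a.1.1 a.2 x).prod * Dlist (N.map (fun pd => pd.1.1) ++ L.map Prod.fst) (F b l) x * (UpsB o.1 σt x * Dpart o (UpsB (L.get j).1.1 (L.get j).2) x) := by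
      intro j
      have e1 : (fun σ' => UpsB b (SB.node l ↑N ↑(L.set (↑j) ((L.get j).1, σ'))) x)
          = fun σ' => ((N.map fun pd => Xc (pd.1.1.1, pd.1.2) x).prod * ((L.eraseIdx (↑j)).map fun a => UpsB a.1.1 a.2 x).prod * Dlist (N.map (fun pd => pd.1.1) ++ L.map Prod.fst) (F b l) x) * UpsB (L.get j).1.1 σ' x := by
        funext σ'
        rw [upsForm b l N (L.set (↑j) ((L.get j).1, σ'))]
        show (N.map fun pd => Xc (pd.1.1.1, pd.1.2) x).prod *
          ((L.set (↑j) ((L.get j).1, σ')).map fun a => UpsB a.1.1 a.2 x).prod *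
          Dlist (N.map (fun pd => pd.1.1) ++ (L.set (↑j) ((L.get j).1, σ')).map Prod.fst)
            (F b l) x = _
        rw [show ((L.set (↑j) ((L.get j).1, σ')).map fun a => UpsB a.1.1 a.2 x).prod
            = UpsB (L.get j).1.1 σ' x * ((L.eraseIdx (↑j)).map fun a => UpsB a.1.1 a.2 x).prod from
              aux_prod_set L (↑j) j.isLt ((L.get j).1, σ') (fun a => UpsB a.1.1 a.2 x),
          show (L.set (↑j) ((L.get j).1, σ')).map Prod.fst = L.map Prod.fst from
            aux_map_fst_set L (↑j) j.isLt σ']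
        ring
      calc evF (fun σ'' => UpsB b σ'' x) (SB.replace l N L j (graftB o σt (L.get j).2))
          = evF (fun σ' => UpsB b (SB.node l ↑N ↑(L.set (↑j) ((L.get j).1, σ'))) x)
              (graftB o σt (L.get j).2) := aux_evF_mapDomain _ _ _
        _ = evF (fun σ' => ((N.map fun pd => Xc (pd.1.1.1, pd.1.2) x).prod * ((L.eraseIdx (↑j)).map fun a => UpsB a.1.1 a.2 x).prod * Dlist (N.map (fun pd => pd.1.1) ++ L.map Prod.fst) (F b l) x) * UpsB (L.get j).1.1 σ' x)
              (graftB o σt (L.get j).2) := by rw [e1]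
        _ = ((N.map fun pd => Xc (pd.1.1.1, pd.1.2) x).prod * ((L.eraseIdx (↑j)).map fun a => UpsB a.1.1 a.2 x).prod * Dlist (N.map (fun pd => pd.1.1) ++ L.map Prod.fst) (F b l) x) *
              evF (fun σ' => UpsB (L.get j).1.1 σ' x) (graftB o σt (L.get j).2) :=
            aux_evF_mul_left _ _ _
        _ = ((N.map fun pd => Xc (pd.1.1.1, pd.1.2) x).prod * ((L.eraseIdx (↑j)).map fun a => UpsB a.1.1 a.2 x).prod * Dlist (N.map (fun pd => pd.1.1) ++ L.map Prod.fst) (F b l) x) * (UpsB o.1 σt x * Dpart o (UpsB (L.get j).1.1 (L.get j).2) x) := by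
            rw [show evF (fun σ' => UpsB (L.get j).1.1 σ' x) (graftB o σt (L.get j).2)
              = UpsB o.1 σt x * Dpart o (UpsB (L.get j).1.1 (L.get j).2) x from (aux_sum_eq_evF _ _).symm.trans
                (congrFun (ih (L.get j) (Multiset.mem_coe.mpr (List.get_mem L j))
                  o σt (L.get j).1.1) x)]
    -- Term 3
    have hT3 : ∀ (i : Fin N.length) (inst : Decidable (o = ((N.get i).1.1.1, (N.get i).1.2))),
        evF (fun σ'' => UpsB b σ'' x)
          (@ite _ (o = ((N.get i).1.1.1, (N.get i).1.2)) inst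
            (Finsupp.single (SB.node l ↑(N.eraseIdx i) (((N.get i).1.1, σt) ::ₘ ↑L)) 1)
            0)
        = (if ((N.get i).1.1.1, (N.get i).1.2) = o then 1 else 0) * (((N.eraseIdx (↑i)).map fun pd => Xc (pd.1.1.1, pd.1.2) x).prod * (UpsB o.1 σt x * (L.map fun a => UpsB a.1.1 a.2 x).prod) * Dlist (N.map (fun pd => pd.1.1) ++ L.map Prod.fst) (F b l) x) := by
      intro i inst
      by_cases hc : o = ((N.get i).1.1.1, (N.get i).1.2)
      · rw [if_pos hc, if_pos hc.symm, one_mul, aux_evF_single, one_mul, Multiset.cons_coe,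
          upsForm b l (N.eraseIdx i) (((N.get i).1.1, σt) :: L)]
        show ((N.eraseIdx (↑i)).map fun pd => Xc (pd.1.1.1, pd.1.2) x).prod *
          ((((N.get i).1.1, σt) :: L).map fun a => UpsB a.1.1 a.2 x).prod *
          Dlist ((N.eraseIdx (↑i)).map (fun pd => pd.1.1) ++
            (((N.get i).1.1, σt) :: L).map Prod.fst) (F b l) x = _
        rw [show ((((N.get i).1.1, σt) :: L).map fun a => UpsB a.1.1 a.2 x).prod
            = UpsB (N.get i).1.1.1 σt x * (L.map fun a => UpsB a.1.1 a.2 x).prod from by simp,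
          show UpsB (N.get i).1.1.1 σt x = UpsB o.1 σt x from by rw [hc],
          show Dlist ((N.eraseIdx (↑i)).map (fun pd => pd.1.1) ++
              (((N.get i).1.1, σt) :: L).map Prod.fst) (F b l)
            = Dlist (N.map (fun pd => pd.1.1) ++ L.map Prod.fst) (F b l) from
              aux_dlist_perm (List.perm_middle.trans
                (((aux_perm_get_eraseIdx N (↑i) i.isLt).map (fun pd => pd.1.1)).append_right
                  (L.map Prod.fst))) (hsmF b l)]
      · rw [if_neg hc, if_neg (fun h => hc h.symm), zero_mul, aux_evF_zero]
    -- Right-hand side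
    have hDA : ∀ y, Dpart o (fun x => (N.map fun pd => Xc (pd.1.1.1, pd.1.2) x).prod) y
        = ∑ i : Fin N.length, Dpart o (Xc ((N.get i).1.1.1, (N.get i).1.2)) y *
            ((N.eraseIdx (↑i)).map fun pd => Xc (pd.1.1.1, pd.1.2) y).prod :=
      fun y => congrFun (aux_dpart_list_prod o N (fun pd => Xc (pd.1.1.1, pd.1.2))
        fun pd _ => aux_smooth_Xc _) y
    have hDB : ∀ y, Dpart o (fun x => (L.map fun a => UpsB a.1.1 a.2 x).prod) y
        = ∑ j : Fin L.length, Dpart o (UpsB (L.get j).1.1 (L.get j).2) y *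
            ((L.eraseIdx (↑j)).map fun a => UpsB a.1.1 a.2 y).prod :=
      fun y => congrFun (aux_dpart_list_prod o L (fun a => UpsB a.1.1 a.2)
        fun a _ => hsmU a.2 a.1.1) y
    have hXc : ∀ (i : Fin N.length) (y : Odx Lp d → ℝ), Dpart o (Xc ((N.get i).1.1.1, (N.get i).1.2)) y
        = if ((N.get i).1.1.1, (N.get i).1.2) = o then 1 else 0 :=
      fun i y => congrFun (aux_dpart_Xc ((N.get i).1.1.1, (N.get i).1.2) o) y
    have hmul3 : ∀ y, Dpart o (fun x => (N.map fun pd => Xc (pd.1.1.1, pd.1.2) x).prod * (L.map fun a => UpsB a.1.1 a.2 x).prod * Dlist (N.map (fun pd => pd.1.1) ++ L.map Prod.fst) (F b l) x) y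
        = Dpart o (fun x => (N.map fun pd => Xc (pd.1.1.1, pd.1.2) x).prod * (L.map fun a => UpsB a.1.1 a.2 x).prod) y * Dlist (N.map (fun pd => pd.1.1) ++ L.map Prod.fst) (F b l) y +
          (N.map fun pd => Xc (pd.1.1.1, pd.1.2) y).prod * (L.map fun a => UpsB a.1.1 a.2 y).prod * Dpart o (Dlist (N.map (fun pd => pd.1.1) ++ L.map Prod.fst) (F b l)) y :=
      fun y => congrFun (aux_dpart_mul (aux_smooth_mul hA hB) hC o) y
    have hmul2 : ∀ y, Dpart o (fun x => (N.map fun pd => Xc (pd.1.1.1, pd.1.2) x).prod * (L.map fun a => UpsB a.1.1 a.2 x).prod) y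
        = Dpart o (fun x => (N.map fun pd => Xc (pd.1.1.1, pd.1.2) x).prod) y * (L.map fun a => UpsB a.1.1 a.2 y).prod +
          (N.map fun pd => Xc (pd.1.1.1, pd.1.2) y).prod * Dpart o (fun x => (L.map fun a => UpsB a.1.1 a.2 x).prod) y :=
      fun y => congrFun (aux_dpart_mul hA hB o) y
    have hR : Dpart o (UpsB b (SB.node l ↑N ↑L)) x
        = ((∑ i : Fin N.length, (if ((N.get i).1.1.1, (N.get i).1.2) = o then 1 else 0) * ((N.eraseIdx (↑i)).map fun pd => Xc (pd.1.1.1, pd.1.2) x).prod) * (L.map fun a => UpsB a.1.1 a.2 x).prod + (N.map fun pd => Xc (pd.1.1.1, pd.1.2) x).prod * (∑ j : Fin L.length, Dpart o (UpsB (L.get j).1.1 (L.get j).2) x * ((L.eraseIdx (↑j)).map fun a => UpsB a.1.1 a.2 x).prod)) * Dlist (N.map (fun pd => pd.1.1) ++ L.map Prod.fst) (F b l) x + (N.map fun pd => Xc (pd.1.1.1, pd.1.2) x).prod * (L.map fun a => UpsB a.1.1 a.2 x).prod * Dpart o (Dlist (N.map (fun pd => pd.1.1) ++ L.map Prod.fst)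 (F b l)) x := by
      rw [upsForm b l N L, hmul3 x, hmul2 x, hDA x, hDB x]
      simp only [hXc]
    -- assemble
    rw [show ((graftB o σt (SB.node l ↑N ↑L)).sum fun σ'' c => c * UpsB b σ'' x)
        = evF (fun σ'' => UpsB b σ'' x) (graftB o σt (SB.node l ↑N ↑L)) from
      aux_sum_eq_evF _ _]
    rw [hgraftB o σt l N L, aux_evF_add, aux_evF_add, aux_evF_finsum, aux_evF_finsum,
      hT1, hR]
    simp only [hT2, hT3]
    have e1 : (N.map fun pd => Xc (pd.1.1.1, pd.1.2) x).prod * (UpsB o.1 σt x * (L.map fun a => UpsB a.1.1 a.2 x).prod) * Dpart o (Dlist (N.map (fun pd => pd.1.1) ++ L.map Prod.fst) (F b l)) x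
        = UpsB o.1 σt x * ((N.map fun pd => Xc (pd.1.1.1, pd.1.2) x).prod * (L.map fun a => UpsB a.1.1 a.2 x).prod * Dpart o (Dlist (N.map (fun pd => pd.1.1) ++ L.map Prod.fst) (F b l)) x) := by ring
    have eY : (∑ j : Fin L.length, (N.map fun pd => Xc (pd.1.1.1, pd.1.2) x).prod * ((L.eraseIdx (↑j)).map fun a => UpsB a.1.1 a.2 x).prod * Dlist (N.map (fun pd => pd.1.1) ++ L.map Prod.fst) (F b l) x * (UpsB o.1 σt x * Dpart o (UpsB (L.get j).1.1 (L.get j).2) x))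
        = UpsB o.1 σt x * ((N.map fun pd => Xc (pd.1.1.1, pd.1.2) x).prod * (∑ j : Fin L.length, Dpart o (UpsB (L.get j).1.1 (L.get j).2) x * ((L.eraseIdx (↑j)).map fun a => UpsB a.1.1 a.2 x).prod) * Dlist (N.map (fun pd => pd.1.1) ++ L.map Prod.fst) (F b l) x) := by
      rw [show (N.map fun pd => Xc (pd.1.1.1, pd.1.2) x).prod * (∑ j : Fin L.length, Dpart o (UpsB (L.get j).1.1 (L.get j).2) x * ((L.eraseIdx (↑j)).map fun a => UpsB a.1.1 a.2 x).prod) * Dlist (N.map (fun pd => pd.1.1) ++ L.map Prod.fst) (F b l) x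
          = ∑ j : Fin L.length, (N.map fun pd => Xc (pd.1.1.1, pd.1.2) x).prod * (Dpart o (UpsB (L.get j).1.1 (L.get j).2) x * ((L.eraseIdx (↑j)).map fun a => UpsB a.1.1 a.2 x).prod) * Dlist (N.map (fun pd => pd.1.1) ++ L.map Prod.fst) (F b l) x from by
        rw [Finset.mul_sum, Finset.sum_mul], Finset.mul_sum]
      exact Finset.sum_congr rfl fun j _ => by ring
    have eX : (∑ i : Fin N.length,
        (if ((N.get i).1.1.1, (N.get i).1.2) = o then 1 else 0) * (((N.eraseIdx (↑i)).map fun pd => Xc (pd.1.1.1, pd.1.2) x).prod * (UpsB o.1 σt x * (L.map fun a => UpsB a.1.1 a.2 x).prod) * Dlist (N.map (fun pd => pd.1.1) ++ L.map Prod.fst) (F b l) x))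
        = UpsB o.1 σt x * ((∑ i : Fin N.length, (if ((N.get i).1.1.1, (N.get i).1.2) = o then 1 else 0) * ((N.eraseIdx (↑i)).map fun pd => Xc (pd.1.1.1, pd.1.2) x).prod) * (L.map fun a => UpsB a.1.1 a.2 x).prod * Dlist (N.map (fun pd => pd.1.1) ++ L.map Prod.fst) (F b l) x) := by
      rw [show (∑ i : Fin N.length, (if ((N.get i).1.1.1, (N.get i).1.2) = o then 1 else 0) * ((N.eraseIdx (↑i)).map fun pd => Xc (pd.1.1.1, pd.1.2) x).prod) * (L.map fun a => UpsB a.1.1 a.2 x).prod * Dlist (N.map (fun pd => pd.1.1) ++ L.map Prod.fst) (F b l) x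
          = ∑ i : Fin N.length, (if ((N.get i).1.1.1, (N.get i).1.2) = o then 1 else 0) * ((N.eraseIdx (↑i)).map fun pd => Xc (pd.1.1.1, pd.1.2) x).prod * (L.map fun a => UpsB a.1.1 a.2 x).prod * Dlist (N.map (fun pd => pd.1.1) ++ L.map Prod.fst) (F b l) x
        from by rw [Finset.sum_mul, Finset.sum_mul], Finset.mul_sum]
      exact Finset.sum_congr rfl fun i _ => by ring
    rw [e1, eY, eX]
    ring
  exact fun o σt σ b => main σ o σt b


end SPDERenorm
end

section
/- Adjoint of the grafting operator on 𝔅 (Lemma 'lem:graftAdjoint' (i)): For o = (𝔱,p) ∈ 𝒪 define the linear map ⋖*_o: 𝔹 → 𝔹 ⊗ 𝔹 on trees σ = T^𝔪_𝔣 ∈ 𝔅 by ⋖*_o σ := Σ_{0≤k≤p} Σ_{e∈E_T} (δ_{𝔣(e),(𝔱,k)}/(p−k)!) · P^e σ ⊗ R^e_{(𝔱,k),p} σ, where (p−k)! := ∏_{i=0}^d (p[i]−k[i])!. Then for all σ₁, σ₂, σ ∈ 𝔅 one has ⟨σ₁ ⊗ σ₂, ⋖*_o σ⟩ = ⟨σ₁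 ⋖_o σ₂, σ⟩, the inner product on 𝔹 ⊗ 𝔹 being the tensor product of the inner products; that is, ⋖*_o is the adjoint of the grafting operator ⋖_o. -/
/-
Common framework: multi-indices, the algebra of smooth functions on ℝ^𝒪,
and the spaces of decorated trees 𝒱 and 𝔅 of [Bruned–Chandra–Chevyrev–Hairer,
"Renormalising SPDEs in regularity structures"], presented abstractly together
with the defining recursions of the various operators on them.
-/

open scoped BigOperators Classical

namespace SPDERenorm

/-! ### Auxiliary machinery for Statement 4 -/

section GraftAdjointAux

noncomputable def phiFun {a b : ℕ} (j : Fin b) (s' : Fin a ≃ {x : Fin b // x ≠ j}) :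
    Fin (a+1) → Fin b :=
  Fin.cases j (fun i => (s' i).val)

lemma phiFun_bij {a b : ℕ} (j : Fin b) (s' : Fin a ≃ {x : Fin b // x ≠ j}) :
    Function.Bijective (phiFun j s') := by
  constructor
  · intro x y h
    induction x using Fin.cases with
    | zero =>
      induction y using Fin.cases with
      | zero => rfl
      | succ y => exact absurd (by simpa [phiFun] using h.symm) (s' y).2
    | succ x =>
      induction y using Fin.cases with
      | zero => exact absurd (by simpa [phiFun] using h) (s' x).2
      | succ y =>
        have : s' x = s' y := Subtype.ext (by simpa [phiFun] using h)
        simpa using s'.injective this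
  · intro x
    by_cases hx : x = j
    · exact ⟨0, by simp [phiFun, hx]⟩
    · exact ⟨(s'.symm ⟨x, hx⟩).succ, by simp [phiFun]⟩

noncomputable def phiEquiv {a b : ℕ} (j : Fin b) (s' : Fin a ≃ {x : Fin b // x ≠ j}) :
    Fin (a+1) ≃ Fin b :=
  Equiv.ofBijective _ (phiFun_bij j s')

@[simp] lemma phiEquiv_zero {a b : ℕ} (j : Fin b) (s' : Fin a ≃ {x : Fin b // x ≠ j}) :
    phiEquiv j s' 0 = j := rfl

@[simp] lemma phiEquiv_succ {a b : ℕ} (j : Fin b) (s' : Fin a ≃ {x : Fin b // x ≠ j})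
    (i : Fin a) : phiEquiv j s' i.succ = (s' i).val := by
  simp [phiEquiv, phiFun, Equiv.ofBijective_apply]

lemma core_sum {a b : ℕ} (f : Fin (a+1) → Fin b → ℝ) :
    ∑ s : Fin (a+1) ≃ Fin b, ∏ i, f i (s i)
      = ∑ j : Fin b, f 0 j *
          ∑ s' : Fin a ≃ {x : Fin b // x ≠ j}, ∏ i : Fin a, f i.succ (s' i).val := by
  have hbij : Function.Bijective
      (fun p : (Σ j : Fin b, (Fin a ≃ {x : Fin b // x ≠ j})) => phiEquiv p.1 p.2) := by
    constructor
    · rintro ⟨j, s'⟩ ⟨k, t'⟩ h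
      have h0 : j = k := by
        have := congrArg (fun e : Fin (a+1) ≃ Fin b => e 0) h
        simpa using this
      subst h0
      have h1 : s' = t' := by
        refine Equiv.ext fun i => Subtype.ext ?_
        have := congrArg (fun e : Fin (a+1) ≃ Fin b => e i.succ) h
        simpa using this
      rw [h1]
    · intro s
      have hne : ∀ i : Fin a, s i.succ ≠ s 0 :=
        fun i => s.injective.ne (Fin.succ_ne_zero i)
      refine ⟨⟨s 0, Equiv.ofBijective (fun i => ⟨s i.succ, hne i⟩) ⟨?_, ?_⟩⟩, ?_⟩
      · intro x y h
        have := s.injective (Subtype.ext_iff.mp h)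
        exact Fin.succ_injective _ this
      · rintro ⟨x, hx⟩
        have h0 : s.symm x ≠ 0 := by
          intro h; apply hx; rw [← h]; simp
        obtain ⟨i, hi⟩ := Fin.exists_succ_eq.2 h0
        exact ⟨i, Subtype.ext (by simp [hi])⟩
      · refine Equiv.ext fun i => ?_
        induction i using Fin.cases with
        | zero => simp
        | succ i =>
          simp [phiEquiv, phiFun]
          rfl
  rw [← Fintype.sum_bijective _ hbij _ (fun s => ∏ i, f i (s i)) (fun p => rfl)]
  rw [← Finset.univ_sigma_univ, Finset.sum_sigma]
  refine Finset.sum_congr rfl fun j _ => ?_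
  rw [Finset.mul_sum]
  refine Finset.sum_congr rfl fun s' _ => ?_
  show (∏ i, f i (phiEquiv j s' i)) = _
  rw [Fin.prod_univ_succ]
  simp

lemma bridge {a m : ℕ} (j : Fin (m+1)) (g : Fin a → Fin (m+1) → ℝ) :
    ∑ s' : Fin a ≃ {x : Fin (m+1) // x ≠ j}, ∏ i, g i (s' i).val
      = ∑ s : Fin a ≃ Fin m, ∏ i, g i (j.succAbove (s i)) := by
  refine (Fintype.sum_bijective (fun s : Fin a ≃ Fin m => s.trans (finSuccAboveEquiv j))
    ((Equiv.equivCongr (Equiv.refl _) (finSuccAboveEquiv j)).bijective) _ _ fun s => ?_).symm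
  simp [finSuccAboveEquiv]

lemma transpose_sum {n m : ℕ} (f : Fin n → Fin m → ℝ) :
    ∑ s : Fin n ≃ Fin m, ∏ i, f i (s i) = ∑ t : Fin m ≃ Fin n, ∏ b, f (t b) b := by
  refine Fintype.sum_bijective Equiv.symm ?_ _ _ fun s => ?_
  · exact ⟨fun a b h => by simpa using congrArg Equiv.symm h,
      fun t => ⟨t.symm, by simp⟩⟩
  · exact Fintype.prod_equiv s _ _ fun i => by simp

lemma sum_equiv_pi_congr {n n' m m' : ℕ} (hn : n = n') (hm : m = m')
    (F : Fin n → Fin m → ℝ) (F' : Fin n' → Fin m' → ℝ)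
    (h : ∀ (i : Fin n) (k : Fin m), F i k = F' (Fin.cast hn i) (Fin.cast hm k)) :
    ∑ s : Fin n ≃ Fin m, ∏ i, F i (s i) = ∑ s : Fin n' ≃ Fin m', ∏ i, F' i (s i) := by
  subst hn; subst hm
  exact Finset.sum_congr rfl fun s _ => Finset.prod_congr rfl fun i _ => h i (s i)

lemma eraseIdx_get {α : Type*} (hd : α) (tl : List α) (j : Fin (hd :: tl).length)
    (k : Fin tl.length) (hk : (k : ℕ) < ((hd :: tl).eraseIdx ↑j).length) :
    ((hd :: tl).eraseIdx ↑j).get ⟨k, hk⟩ = (hd :: tl).get (j.succAbove k) := by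
  simp only [List.get_eq_getElem]
  rw [List.getElem_eraseIdx]
  rcases lt_or_ge (k : ℕ) (j : ℕ) with h' | h'
  · have hsa : j.succAbove k = k.castSucc :=
      Fin.succAbove_of_castSucc_lt _ _ (by rw [Fin.lt_def]; simpa using h')
    rw [dif_pos h', hsa]
    rfl
  · have hsa : j.succAbove k = k.succ :=
      Fin.succAbove_of_le_castSucc _ _ (by rw [Fin.le_def]; simpa using h')
    rw [dif_neg (by omega), hsa]
    rfl

lemma length_eraseIdx' {α : Type*} (hd : α) (tl : List α) (j : Fin (hd :: tl).length) :
    ((hd :: tl).eraseIdx ↑j).length = tl.length := by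
  rw [List.length_eraseIdx]
  simp [j.isLt]
  have := j.isLt; simp only [List.length_cons] at this; omega

lemma coe_set_eq_cons_eraseIdx {α : Type*} (L : List α) (j : Fin L.length) (x : α) :
    (↑(L.set ↑j x) : Multiset α) = x ::ₘ ↑(L.eraseIdx ↑j) := by
  rw [List.set_eq_take_append_cons_drop, if_pos j.isLt, List.eraseIdx_eq_take_drop_succ]
  exact Quot.sound List.perm_middle

lemma coe_eq_get_cons_eraseIdx {α : Type*} (L : List α) (j : Fin L.length) :
    (↑L : Multiset α) = L.get j ::ₘ ↑(L.eraseIdx ↑j) := by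
  conv_lhs => rw [← List.take_append_drop (↑j) L, ← List.getElem_cons_drop (as := L) (i := j) j.isLt]
  rw [List.eraseIdx_eq_take_drop_succ]
  simp only [List.get_eq_getElem]
  exact Quot.sound List.perm_middle

lemma inv_mul_shuffle {m a k : ℝ} (h : m ≠ 0) : m⁻¹ * (a * (m * k)) = a * k := by
  field_simp

lemma mfact_pos {d : ℕ} (k : MIdx d) : 0 < mfact k :=
  Finset.prod_pos fun _ _ => Nat.factorial_pos _

lemma finsupp_sum_finset_sum {A : Type*} {ι : Type*} (w : A →₀ ℝ) (s : Finset ι)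
    (F : ι → A → ℝ → ℝ) :
    (w.sum fun a c => ∑ j ∈ s, F j a c) = ∑ j ∈ s, w.sum fun a c => F j a c := by
  rw [Finsupp.sum]
  simp_rw [Finsupp.sum]
  exact Finset.sum_comm

section Peel
variable {Lp Dr : Type} {d : ℕ} (S : TreeB Lp Dr d) (ip : S.B → S.B → ℝ) (hip : S.IPSpec ip)

lemma isEmpty_equiv_fin_zero {n : ℕ} : IsEmpty (Fin (n+1) ≃ Fin 0) :=
  ⟨fun s => Fin.elim0 (s 0)⟩

include hip in
lemma peel_left (l l' : Dr) (N N' : List (PolyDec Lp d)) (e : Odx Lp d) (τ : S.B)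
    (L' L : List (Odx Lp d × S.B)) :
    ip (S.node l' ↑N' ↑((e, τ) :: L')) (S.node l ↑N ↑L)
      = ∑ j : Fin L.length, (if e = (L.get j).1 then ip τ (L.get j).2 else 0) *
          ip (S.node l' ↑N' ↑L') (S.node l ↑N ↑(L.eraseIdx ↑j)) := by
  cases L with
  | nil =>
    rw [hip]
    haveI : IsEmpty (Fin (L'.length + 1) ≃ Fin 0) := isEmpty_equiv_fin_zero
    simp
  | cons hd tl =>
    rw [hip]
    simp only [List.length_cons]
    rw [core_sum (fun (i : Fin (L'.length+1)) (b : Fin (tl.length+1)) =>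
      if (((e, τ) :: L').get i).1 = ((hd :: tl).get b).1 then
        ip (((e, τ) :: L').get i).2 ((hd :: tl).get b).2 else 0)]
    rw [Finset.mul_sum]
    refine Finset.sum_congr rfl fun j _ => ?_
    rw [bridge j (fun (i : Fin L'.length) (x : Fin (tl.length+1)) =>
      if (((e, τ) :: L').get i.succ).1 = ((hd :: tl).get x).1 then
        ip (((e, τ) :: L').get i.succ).2 ((hd :: tl).get x).2 else 0)]
    rw [hip]
    have hlen : ((hd :: tl).eraseIdx ↑j).length = tl.length := length_eraseIdx' hd tl j
    have hkey : ∑ s : Fin L'.length ≃ Fin tl.length,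
        ∏ i : Fin L'.length,
          (if (((e, τ) :: L').get i.succ).1 = ((hd :: tl).get (j.succAbove (s i))).1 then
              ip (((e, τ) :: L').get i.succ).2 ((hd :: tl).get (j.succAbove (s i))).2 else 0)
        = ∑ s : Fin L'.length ≃ Fin ((hd :: tl).eraseIdx ↑j).length,
          ∏ i : Fin L'.length,
            (if (L'.get i).1 = (((hd :: tl).eraseIdx ↑j).get (s i)).1 then
              ip (L'.get i).2 ((((hd :: tl).eraseIdx ↑j)).get (s i)).2 else 0) := by
      refine sum_equiv_pi_congr rfl hlen.symm
        (fun (i : Fin L'.length) (k : Fin tl.length) =>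
          if (((e, τ) :: L').get i.succ).1 = ((hd :: tl).get (j.succAbove k)).1 then
            ip (((e, τ) :: L').get i.succ).2 ((hd :: tl).get (j.succAbove k)).2 else 0)
        (fun (i : Fin L'.length) (k : Fin ((hd :: tl).eraseIdx ↑j).length) =>
          if (L'.get i).1 = (((hd :: tl).eraseIdx ↑j).get k).1 then
            ip (L'.get i).2 (((hd :: tl).eraseIdx ↑j).get k).2 else 0)
        fun i k => ?_
      have hg : ((hd :: tl).eraseIdx ↑j).get (Fin.cast hlen.symm k) = (hd :: tl).get (j.succAbove k) := by
        have := eraseIdx_get hd tl j k (by omega)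
        convert this using 2
        rfl
      simp only [hg]
      simp
    rw [← hkey]
    have h0 : (((e, τ) :: L').get (0 : Fin (L'.length+1))) = (e, τ) := rfl
    rw [h0]
    ring

include hip in
lemma peel_right_child (l l' : Dr) (N N' : List (PolyDec Lp d)) (e : Odx Lp d) (τ : S.B)
    (L' L : List (Odx Lp d × S.B)) :
    ip (S.node l' ↑N' ↑L') (S.node l ↑N ↑((e, τ) :: L))
      = ∑ j' : Fin L'.length, (if (L'.get j').1 = e then ip (L'.get j').2 τ else 0) *
          ip (S.node l' ↑N' ↑(L'.eraseIdx ↑j')) (S.node l ↑N ↑L) := by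
  cases L' with
  | nil =>
    rw [hip]
    haveI : IsEmpty (Fin 0 ≃ Fin (L.length + 1)) :=
      ⟨fun s => Fin.elim0 (s.symm 0)⟩
    simp
  | cons hd tl =>
    rw [hip]
    simp only [List.length_cons]
    rw [transpose_sum (fun (i : Fin (tl.length+1)) (b : Fin (L.length+1)) =>
      if ((hd :: tl).get i).1 = (((e, τ) :: L).get b).1 then
        ip ((hd :: tl).get i).2 (((e, τ) :: L).get b).2 else 0)]
    rw [core_sum (fun (b : Fin (L.length+1)) (i : Fin (tl.length+1)) =>
      if ((hd :: tl).get i).1 = (((e, τ) :: L).get b).1 then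
        ip ((hd :: tl).get i).2 (((e, τ) :: L).get b).2 else 0)]
    rw [Finset.mul_sum]
    refine Finset.sum_congr rfl fun j' _ => ?_
    rw [bridge j' (fun (b : Fin L.length) (x : Fin (tl.length+1)) =>
      if ((hd :: tl).get x).1 = (((e, τ) :: L).get b.succ).1 then
        ip ((hd :: tl).get x).2 (((e, τ) :: L).get b.succ).2 else 0)]
    rw [hip]
    have hlen : ((hd :: tl).eraseIdx ↑j').length = tl.length := length_eraseIdx' hd tl j'
    rw [transpose_sum (fun (i : Fin ((hd :: tl).eraseIdx ↑j').length) (b : Fin L.length) =>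
      if (((hd :: tl).eraseIdx ↑j').get i).1 = (L.get b).1 then
        ip (((hd :: tl).eraseIdx ↑j').get i).2 (L.get b).2 else 0)]
    have hkey : ∑ s : Fin L.length ≃ Fin tl.length,
        ∏ b : Fin L.length,
          (if ((hd :: tl).get (j'.succAbove (s b))).1 = (((e, τ) :: L).get b.succ).1 then
              ip ((hd :: tl).get (j'.succAbove (s b))).2 (((e, τ) :: L).get b.succ).2 else 0)
        = ∑ s : Fin L.length ≃ Fin ((hd :: tl).eraseIdx ↑j').length,
          ∏ b : Fin L.length,
            (if (((hd :: tl).eraseIdx ↑j').get (s b)).1 = (L.get b).1 then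
              ip (((hd :: tl).eraseIdx ↑j').get (s b)).2 (L.get b).2 else 0) := by
      refine sum_equiv_pi_congr rfl hlen.symm
        (fun (b : Fin L.length) (k : Fin tl.length) =>
          if ((hd :: tl).get (j'.succAbove k)).1 = (((e, τ) :: L).get b.succ).1 then
            ip ((hd :: tl).get (j'.succAbove k)).2 (((e, τ) :: L).get b.succ).2 else 0)
        (fun (b : Fin L.length) (k : Fin ((hd :: tl).eraseIdx ↑j').length) =>
          if (((hd :: tl).eraseIdx ↑j').get k).1 = (L.get b).1 then
            ip (((hd :: tl).eraseIdx ↑j').get k).2 (L.get b).2 else 0)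
        fun b k => ?_
      have hg : ((hd :: tl).eraseIdx ↑j').get (Fin.cast hlen.symm k) = (hd :: tl).get (j'.succAbove k) := by
        have := eraseIdx_get hd tl j' k (by omega)
        convert this using 2
        rfl
      simp only [hg]
      simp
    rw [← hkey]
    have h0 : ((((e, τ) :: L)).get (0 : Fin (L.length+1))) = (e, τ) := rfl
    rw [h0]
    ring

include hip in
lemma peel_polydec (l l' : Dr) (N N' : List (PolyDec Lp d)) (pd : PolyDec Lp d)
    (L' L : List (Odx Lp d × S.B)) :
    ip (S.node l' ↑N' ↑L') (S.node l ↑(pd :: N) ↑L)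
      = ∑ i' : Fin N'.length,
          (if (N'.get i').1 = pd.1 then (mfact ((N'.get i').1.2 - (N'.get i').1.1.2) : ℝ) else 0) *
          ip (S.node l' ↑(N'.eraseIdx ↑i') ↑L') (S.node l ↑N ↑L) := by
  cases N' with
  | nil =>
    rw [hip]
    haveI : IsEmpty (Fin 0 ≃ Fin (N.length + 1)) :=
      ⟨fun s => Fin.elim0 (s.symm 0)⟩
    simp
  | cons hd tl =>
    rw [hip]
    simp only [List.length_cons]
    rw [transpose_sum (fun (i : Fin (tl.length+1)) (b : Fin (N.length+1)) =>
      if ((hd :: tl).get i).1 = ((pd :: N).get b).1 then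
        (mfact (((hd :: tl).get i).1.2 - ((hd :: tl).get i).1.1.2) : ℝ) else 0)]
    rw [core_sum (fun (b : Fin (N.length+1)) (i : Fin (tl.length+1)) =>
      if ((hd :: tl).get i).1 = ((pd :: N).get b).1 then
        (mfact (((hd :: tl).get i).1.2 - ((hd :: tl).get i).1.1.2) : ℝ) else 0)]
    rw [mul_comm (if l' = l then (1:ℝ) else 0)]
    rw [Finset.sum_mul]
    rw [Finset.sum_mul]
    refine Finset.sum_congr rfl fun i' _ => ?_
    rw [bridge i' (fun (b : Fin N.length) (x : Fin (tl.length+1)) =>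
      if ((hd :: tl).get x).1 = ((pd :: N).get b.succ).1 then
        (mfact (((hd :: tl).get x).1.2 - ((hd :: tl).get x).1.1.2) : ℝ) else 0)]
    rw [hip]
    have hlen : ((hd :: tl).eraseIdx ↑i').length = tl.length := length_eraseIdx' hd tl i'
    rw [transpose_sum (fun (i : Fin ((hd :: tl).eraseIdx ↑i').length) (b : Fin N.length) =>
      if (((hd :: tl).eraseIdx ↑i').get i).1 = (N.get b).1 then
        (mfact ((((hd :: tl).eraseIdx ↑i').get i).1.2 - (((hd :: tl).eraseIdx ↑i').get i).1.1.2) : ℝ) else 0)]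
    have hkey : ∑ s : Fin N.length ≃ Fin tl.length,
        ∏ b : Fin N.length,
          (if ((hd :: tl).get (i'.succAbove (s b))).1 = ((pd :: N).get b.succ).1 then
              (mfact (((hd :: tl).get (i'.succAbove (s b))).1.2 - ((hd :: tl).get (i'.succAbove (s b))).1.1.2) : ℝ) else 0)
        = ∑ s : Fin N.length ≃ Fin ((hd :: tl).eraseIdx ↑i').length,
          ∏ b : Fin N.length,
            (if (((hd :: tl).eraseIdx ↑i').get (s b)).1 = (N.get b).1 then
              (mfact ((((hd :: tl).eraseIdx ↑i').get (s b)).1.2 - (((hd :: tl).eraseIdx ↑i').get (s b)).1.1.2) : ℝ) else 0) := by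
      refine sum_equiv_pi_congr rfl hlen.symm
        (fun (b : Fin N.length) (k : Fin tl.length) =>
          if ((hd :: tl).get (i'.succAbove k)).1 = ((pd :: N).get b.succ).1 then
            (mfact (((hd :: tl).get (i'.succAbove k)).1.2 - ((hd :: tl).get (i'.succAbove k)).1.1.2) : ℝ) else 0)
        (fun (b : Fin N.length) (k : Fin ((hd :: tl).eraseIdx ↑i').length) =>
          if (((hd :: tl).eraseIdx ↑i').get k).1 = (N.get b).1 then
            (mfact ((((hd :: tl).eraseIdx ↑i').get k).1.2 - (((hd :: tl).eraseIdx ↑i').get k).1.1.2) : ℝ) else 0)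
        fun b k => ?_
      have hg : ((hd :: tl).eraseIdx ↑i').get (Fin.cast hlen.symm k) = (hd :: tl).get (i'.succAbove k) := by
        have := eraseIdx_get hd tl i' k (by omega)
        convert this using 2
        rfl
      simp only [hg]
      simp
    rw [← hkey]
    have h0 : (((pd :: N)).get (0 : Fin (N.length+1))) = pd := rfl
    rw [h0]
    ring

end Peel

end GraftAdjointAux

/-- Lemma `lem:graftAdjoint` (i): the cutting operator `⋖*_o` is the
adjoint of the grafting operator `⋖_o` on `𝔹`: for all `σ₁, σ₂, σ ∈ 𝔅` one has
`⟨σ₁ ⊗ σ₂, ⋖*_o σ⟩ = ⟨σ₁ ⋖_o σ₂, σ⟩`. -/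
theorem statement4
    {d : ℕ} {Lp Dr : Type} [Fintype Lp] [DecidableEq Lp]
    (SB : TreeB Lp Dr d)
    (ipB : SB.B → SB.B → ℝ) (hipB : SB.IPSpec ipB)
    (graftB : Odx Lp d → SB.B → SB.B → (SB.B →₀ ℝ)) (hgraftB : SB.GraftSpec graftB)
    (cutB : Odx Lp d → SB.B → (SB.B × SB.B →₀ ℝ)) (hcutB : SB.CutSpec cutB) :
    ∀ (o : Odx Lp d) (σ₁ σ₂ σ : SB.B),
      ((cutB o σ).sum fun ab c => c * (ipB σ₁ ab.1 * ipB σ₂ ab.2)) =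
        (graftB o σ₁ σ₂).sum fun σ' c => c * ipB σ' σ := by
  rename_i instF instD
  intro o σ₁ σ₂ σ
  clear instD instF
  obtain ⟨t, p⟩ := o
  revert σ₂
  refine SB.ind (fun σ => ∀ σ₂ : SB.B,
      ((cutB (t, p) σ).sum fun ab c => c * (ipB σ₁ ab.1 * ipB σ₂ ab.2)) =
        (graftB (t, p) σ₁ σ₂).sum fun σ' c => c * ipB σ' σ) ?_ σ
  intro l NM LM IH
  obtain ⟨N, hN⟩ := Quotient.exists_rep NM
  have hN' : (↑N : Multiset (PolyDec Lp d)) = NM := hN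
  subst hN'
  obtain ⟨L, hL⟩ := Quotient.exists_rep LM
  have hL' : (↑L : Multiset (Odx Lp d × SB.B)) = LM := hL
  subst hL'
  intro σ₂
  obtain ⟨x, hx⟩ := SB.node_bij.2 σ₂
  obtain ⟨l', NM', LM'⟩ := x
  obtain ⟨N', hN2⟩ := Quotient.exists_rep NM'
  have hN2' : (↑N' : Multiset (PolyDec Lp d)) = NM' := hN2
  subst hN2'
  obtain ⟨L', hL2⟩ := Quotient.exists_rep LM'
  have hL2' : (↑L' : Multiset (Odx Lp d × SB.B)) = LM' := hL2
  subst hL2'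
  have hσ₂ : σ₂ = SB.node l' ↑N' ↑L' := hx.symm
  subst hσ₂
  rw [hcutB, hgraftB]
  -- abbreviations
  set T1 : Fin L.length → ℝ := fun j =>
    (if ((t, p) : Odx Lp d) = (L.get j).1 then ipB σ₁ (L.get j).2 else 0) *
      ipB (SB.node l' ↑N' ↑L') (SB.node l ↑N ↑(L.eraseIdx ↑j)) with hT1
  set T2 : Fin L.length → Fin N'.length → ℝ := fun j i =>
    if ((t, p) : Odx Lp d) = ((N'.get i).1.1.1, (N'.get i).1.2) ∧
        (N'.get i).1.1 = (L.get j).1 then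
      ipB σ₁ (L.get j).2 *
        ipB (SB.node l' ↑(N'.eraseIdx ↑i) ↑L') (SB.node l ↑N ↑(L.eraseIdx ↑j))
    else 0 with hT2
  set T3 : Fin L.length → Fin L'.length → ℝ := fun j j' =>
    (if (L'.get j').1 = (L.get j).1 then
        ((graftB (t, p) σ₁ (L'.get j').2).sum fun σ' c => c * ipB σ' (L.get j).2)
      else 0) *
      ipB (SB.node l' ↑N' ↑(L'.eraseIdx ↑j')) (SB.node l ↑N ↑(L.eraseIdx ↑j)) with hT3
  -- expand the Finsupp sums
  have hF0 : ∀ a : SB.B × SB.B,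
      (fun (ab : SB.B × SB.B) (c : ℝ) =>
        c * (ipB σ₁ ab.1 * ipB (SB.node l' ↑N' ↑L') ab.2)) a 0 = 0 :=
    fun a => zero_mul _
  have hFadd : ∀ (a : SB.B × SB.B) (b₁ b₂ : ℝ),
      (fun (ab : SB.B × SB.B) (c : ℝ) =>
        c * (ipB σ₁ ab.1 * ipB (SB.node l' ↑N' ↑L') ab.2)) a (b₁ + b₂)
      = (fun (ab : SB.B × SB.B) (c : ℝ) =>
        c * (ipB σ₁ ab.1 * ipB (SB.node l' ↑N' ↑L') ab.2)) a b₁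
        + (fun (ab : SB.B × SB.B) (c : ℝ) =>
        c * (ipB σ₁ ab.1 * ipB (SB.node l' ↑N' ↑L') ab.2)) a b₂ :=
    fun a b₁ b₂ => add_mul _ _ _
  have hG0 : ∀ a : SB.B,
      (fun (σ' : SB.B) (c : ℝ) => c * ipB σ' (SB.node l ↑N ↑L)) a 0 = 0 :=
    fun a => zero_mul _
  have hGadd : ∀ (a : SB.B) (b₁ b₂ : ℝ),
      (fun (σ' : SB.B) (c : ℝ) => c * ipB σ' (SB.node l ↑N ↑L)) a (b₁ + b₂)
      = (fun (σ' : SB.B) (c : ℝ) => c * ipB σ' (SB.node l ↑N ↑L)) a b₁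
        + (fun (σ' : SB.B) (c : ℝ) => c * ipB σ' (SB.node l ↑N ↑L)) a b₂ :=
    fun a b₁ b₂ => add_mul _ _ _
  rw [Finsupp.sum_add_index' hF0 hFadd, Finsupp.sum_add_index' hG0 hGadd,
      Finsupp.sum_add_index' hG0 hGadd]
  rw [← Finsupp.sum_finset_sum_index hF0 hFadd,
      ← Finsupp.sum_finset_sum_index hF0 hFadd,
      ← Finsupp.sum_finset_sum_index hG0 hGadd,
      ← Finsupp.sum_finset_sum_index hG0 hGadd]
  -- the root-cut block
  have hDj : ∀ j : Fin L.length,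
      ((if hc : (L.get j).1.1 = t ∧ (L.get j).1.2 ≤ p then
          ((mfact (p - (L.get j).1.2) : ℝ))⁻¹ •
            Finsupp.single ((L.get j).2,
              SB.node l
                (if he : (L.get j).1.2 = p then (↑N : Multiset (PolyDec Lp d))
                 else (⟨((L.get j).1, p), hc.2, he⟩ ::ₘ (↑N : Multiset (PolyDec Lp d))))
                ↑(L.eraseIdx ↑j)) 1
        else 0).sum fun ab c => c * (ipB σ₁ ab.1 * ipB (SB.node l' ↑N' ↑L') ab.2))
      = T1 j + ∑ i : Fin N'.length, T2 j i := by
    intro j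
    by_cases hc : (L.get j).1.1 = t ∧ (L.get j).1.2 ≤ p
    · rw [dif_pos hc]
      by_cases he : (L.get j).1.2 = p
      · rw [dif_pos he, Finsupp.smul_single', mul_one,
            Finsupp.sum_single_index (hF0 _)]
        have hpp : mfact (p - (L.get j).1.2) = 1 := by
          rw [he]; simp [mfact]
        rw [hpp, Nat.cast_one, inv_one, one_mul]
        have hcond : ((t, p) : Odx Lp d) = (L.get j).1 := by
          have := Prod.mk.eta (p := (L.get j).1)
          rw [← this, hc.1, he]
        have hzero : ∑ i : Fin N'.length, T2 j i = 0 := by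
          refine Finset.sum_eq_zero fun i _ => ?_
          simp only [hT2]
          refine if_neg ?_
          rintro ⟨h1, h2⟩
          have hp2 : (N'.get i).1.2 = p := (congrArg Prod.snd h1).symm
          have hp1 : (N'.get i).1.1.2 = p := (congrArg Prod.snd h2).trans he
          exact (N'.get i).2.2 (hp1.trans hp2.symm)
        rw [hzero, add_zero]
        simp only [hT1]
        rw [if_pos hcond]
      · rw [dif_neg he, Finsupp.smul_single', mul_one,
            Finsupp.sum_single_index (hF0 _), Multiset.cons_coe,
            peel_polydec SB ipB hipB l l' N N' ⟨((L.get j).1, p), hc.2, he⟩ L'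
              (L.eraseIdx ↑j)]
        have hzero : T1 j = 0 := by
          simp only [hT1]
          have : ¬ ((t, p) : Odx Lp d) = (L.get j).1 := by
            intro h
            exact he (congrArg Prod.snd h).symm
          rw [if_neg this, zero_mul]
        rw [hzero, zero_add, Finset.mul_sum, Finset.mul_sum]
        refine Finset.sum_congr rfl fun i _ => ?_
        by_cases hcnd : (N'.get i).1 = (((L.get j).1, p) : Odx Lp d × MIdx d)
        · have hA : (N'.get i).1.1 = (L.get j).1 := congrArg Prod.fst hcnd
          have hB : (N'.get i).1.2 = p := congrArg Prod.snd hcnd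
          have hc1 : ((t, p) : Odx Lp d) = ((N'.get i).1.1.1, (N'.get i).1.2) := by
            refine Prod.ext ?_ ?_
            · exact (hc.1.symm.trans (congrArg Prod.fst hA).symm : t = (N'.get i).1.1.1)
            · exact hB.symm
          simp only [hT2]
          rw [if_pos hcnd, if_pos ⟨hc1, hA⟩, hB,
              show (N'.get i).1.1.2 = (L.get j).1.2 from congrArg Prod.snd hA]
          have hnz : (mfact (p - (L.get j).1.2) : ℝ) ≠ 0 :=
            Nat.cast_ne_zero.mpr (mfact_pos _).ne'
          exact inv_mul_shuffle hnz
        · simp only [hT2]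
          rw [if_neg hcnd]
          have : ¬ (((t, p) : Odx Lp d) = ((N'.get i).1.1.1, (N'.get i).1.2) ∧
              (N'.get i).1.1 = (L.get j).1) := by
            rintro ⟨h1, h2⟩
            exact hcnd (Prod.ext h2 (congrArg Prod.snd h1).symm)
          rw [if_neg this, zero_mul, mul_zero, mul_zero]
    · rw [dif_neg hc, Finsupp.sum_zero_index]
      have h1 : T1 j = 0 := by
        simp only [hT1]
        have : ¬ ((t, p) : Odx Lp d) = (L.get j).1 := by
          intro h
          exact hc ⟨(congrArg Prod.fst h).symm, le_of_eq (congrArg Prod.snd h).symm⟩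
        rw [if_neg this, zero_mul]
      have h2 : ∑ i : Fin N'.length, T2 j i = 0 := by
        refine Finset.sum_eq_zero fun i _ => ?_
        simp only [hT2]
        refine if_neg ?_
        rintro ⟨ha, hb⟩
        refine hc ⟨(congrArg Prod.fst hb).symm.trans (congrArg Prod.fst ha).symm, ?_⟩
        calc (L.get j).1.2 = (N'.get i).1.1.2 := (congrArg Prod.snd hb).symm
          _ ≤ (N'.get i).1.2 := (N'.get i).2.1
          _ = p := (congrArg Prod.snd ha).symm
      rw [h1, h2, add_zero]
  -- the internal-cut block
  have hEj : ∀ j : Fin L.length,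
      (((cutB (t, p) (L.get j).2).sum fun ab c =>
          Finsupp.single (ab.1, SB.node l ↑N ↑(L.set ↑j ((L.get j).1, ab.2))) c).sum
        fun ab c => c * (ipB σ₁ ab.1 * ipB (SB.node l' ↑N' ↑L') ab.2))
      = ∑ j' : Fin L'.length, T3 j j' := by
    intro j
    rw [Finsupp.sum_sum_index hF0 hFadd]
    have hrw : ∀ b : SB.B,
        ipB (SB.node l' ↑N' ↑L') (SB.node l ↑N ↑(L.set ↑j ((L.get j).1, b)))
        = ∑ j' : Fin L'.length,
            (if (L'.get j').1 = (L.get j).1 then ipB (L'.get j').2 b else 0) *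
            ipB (SB.node l' ↑N' ↑(L'.eraseIdx ↑j')) (SB.node l ↑N ↑(L.eraseIdx ↑j)) := by
      intro b
      rw [coe_set_eq_cons_eraseIdx L j ((L.get j).1, b), Multiset.cons_coe]
      exact peel_right_child SB ipB hipB l l' N N' (L.get j).1 b L' (L.eraseIdx ↑j)
    trans ((cutB (t, p) (L.get j).2).sum fun ab c => ∑ j' : Fin L'.length,
      c * (ipB σ₁ ab.1 *
        ((if (L'.get j').1 = (L.get j).1 then ipB (L'.get j').2 ab.2 else 0) *
          ipB (SB.node l' ↑N' ↑(L'.eraseIdx ↑j')) (SB.node l ↑N ↑(L.eraseIdx ↑j)))))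
    · refine Finsupp.sum_congr fun ab _ => ?_
      rw [Finsupp.sum_single_index (hF0 _), hrw ab.2, Finset.mul_sum, Finset.mul_sum]
    rw [finsupp_sum_finset_sum]
    refine Finset.sum_congr rfl fun j' _ => ?_
    simp only [hT3]
    by_cases h2 : (L'.get j').1 = (L.get j).1
    · rw [if_pos h2, ← IH (L.get j) (Multiset.mem_coe.mpr (by simpa using List.get_mem L j j.isLt)) (L'.get j').2,
          Finsupp.sum_mul]
      refine Finsupp.sum_congr fun ab _ => ?_
      rw [if_pos h2]
      ring
    · rw [if_neg h2, zero_mul]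
      trans ((cutB (t, p) (L.get j).2).sum fun ab c => (0:ℝ))
      · refine Finsupp.sum_congr fun ab _ => ?_
        rw [if_neg h2]
        ring
      exact Finset.sum_const_zero
  -- the grafted-at-root block
  have hX : ((Finsupp.single (SB.node l' (↑N') ((((t, p) : Odx Lp d), σ₁) ::ₘ ↑L')) (1:ℝ)).sum
        fun σ' c => c * ipB σ' (SB.node l ↑N ↑L))
      = ∑ j : Fin L.length, T1 j := by
    rw [Finsupp.sum_single_index (hG0 _), one_mul, Multiset.cons_coe,
        peel_left SB ipB hipB l l' N N' (t, p) σ₁ L' L]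
  -- the grafted-into-subtree block
  have hRj : ∀ j' : Fin L'.length,
      ((SB.replace l' N' L' j' (graftB (t, p) σ₁ (L'.get j').2)).sum
        fun σ' c => c * ipB σ' (SB.node l ↑N ↑L))
      = ∑ j : Fin L.length, T3 j j' := by
    intro j'
    rw [TreeB.replace, Finsupp.sum_sum_index hG0 hGadd]
    have hrw : ∀ τ' : SB.B,
        ipB (SB.node l' ↑N' ↑(L'.set ↑j' ((L'.get j').1, τ'))) (SB.node l ↑N ↑L)
        = ∑ j : Fin L.length,
            (if (L'.get j').1 = (L.get j).1 then ipB τ' (L.get j).2 else 0) *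
            ipB (SB.node l' ↑N' ↑(L'.eraseIdx ↑j')) (SB.node l ↑N ↑(L.eraseIdx ↑j)) := by
      intro τ'
      rw [coe_set_eq_cons_eraseIdx L' j' ((L'.get j').1, τ'), Multiset.cons_coe]
      exact peel_left SB ipB hipB l l' N N' (L'.get j').1 τ' (L'.eraseIdx ↑j') L
    trans ((graftB (t, p) σ₁ (L'.get j').2).sum fun τ' c => ∑ j : Fin L.length,
      c * ((if (L'.get j').1 = (L.get j).1 then ipB τ' (L.get j).2 else 0) *
          ipB (SB.node l' ↑N' ↑(L'.eraseIdx ↑j')) (SB.node l ↑N ↑(L.eraseIdx ↑j))))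
    · refine Finsupp.sum_congr fun τ' _ => ?_
      rw [Finsupp.sum_single_index (hG0 _), hrw τ', Finset.mul_sum]
    rw [finsupp_sum_finset_sum]
    refine Finset.sum_congr rfl fun j _ => ?_
    simp only [hT3]
    by_cases h2 : (L'.get j').1 = (L.get j).1
    · rw [if_pos h2, Finsupp.sum_mul]
      refine Finsupp.sum_congr fun τ' _ => ?_
      rw [if_pos h2]
      ring
    · rw [if_neg h2, zero_mul]
      trans ((graftB (t, p) σ₁ (L'.get j').2).sum fun τ' c => (0:ℝ))
      · refine Finsupp.sum_congr fun τ' _ => ?_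
        rw [if_neg h2]
        ring
      exact Finset.sum_const_zero
  -- the polynomial-decoration block
  have hZi : ∀ i : Fin N'.length,
      ((if ((t, p) : Odx Lp d) = ((N'.get i).1.1.1, (N'.get i).1.2) then
          Finsupp.single
            (SB.node l' (↑(N'.eraseIdx ↑i)) (((N'.get i).1.1, σ₁) ::ₘ ↑L')) (1:ℝ)
        else 0).sum fun σ' c => c * ipB σ' (SB.node l ↑N ↑L))
      = ∑ j : Fin L.length, T2 j i := by
    intro i
    by_cases hcnd : ((t, p) : Odx Lp d) = ((N'.get i).1.1.1, (N'.get i).1.2)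
    · rw [if_pos hcnd, Finsupp.sum_single_index (hG0 _), one_mul, Multiset.cons_coe,
          peel_left SB ipB hipB l l' N (N'.eraseIdx ↑i) (N'.get i).1.1 σ₁ L' L]
      refine Finset.sum_congr rfl fun j _ => ?_
      simp only [hT2]
      by_cases h2 : (N'.get i).1.1 = (L.get j).1
      · rw [if_pos h2, if_pos ⟨hcnd, h2⟩]
      · rw [if_neg h2, if_neg (fun h => h2 h.2), zero_mul]
    · rw [if_neg hcnd, Finsupp.sum_zero_index]
      exact (Finset.sum_eq_zero fun j _ => by
        simp only [hT2]; exact if_neg fun h => hcnd h.1).symm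
  -- assemble
  have e1 := Finset.sum_congr rfl fun (j : Fin L.length) (_ : j ∈ Finset.univ) => hDj j
  have e2 := Finset.sum_congr rfl fun (j : Fin L.length) (_ : j ∈ Finset.univ) => hEj j
  have e4 := Finset.sum_congr rfl fun (j' : Fin L'.length) (_ : j' ∈ Finset.univ) => hRj j'
  have e5 := Finset.sum_congr rfl fun (i : Fin N'.length) (_ : i ∈ Finset.univ) => hZi i
  rw [e1, e2, hX, e4, e5]
  rw [Finset.sum_add_distrib]
  have c1 : ∑ j : Fin L.length, ∑ i : Fin N'.length, T2 j i
      = ∑ i : Fin N'.length, ∑ j : Fin L.length, T2 j i := Finset.sum_comm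
  have c2 : ∑ j : Fin L.length, ∑ j' : Fin L'.length, T3 j j'
      = ∑ j' : Fin L'.length, ∑ j : Fin L.length, T3 j j' := Finset.sum_comm
  rw [c1, c2]
  ring

end SPDERenorm
end
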